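/- arXiv:2303.17721 — 5 statements merged into one kernel-verified Lean document; each statement's English description precedes it below -/
import Mathlib

section
/- Let n ≥ 1 be an integer. There exists a constant C > 0 (depending only on n) such that for every measurable function f : ℝ^n → ℝ and every x ∈ ℝ^n and t > 0, √t · ∫_{ℝ^n} ‖∇K_t(x − y)‖ · |f(y)| dy ≤ C · sup_{r>0} (1/vol(B(x,r))) ∫_{B(x,r)} |f(y)| dy, where the right-hand supremum is taken over all Euclidean balls B(x,r) centered at x. -/
open MeasureTheory Metric
open scoped ENNReal NNReal

/-- The Gaussian heat kernel `K_t(x) = (4πt)^{-n/2} exp(-‖x‖²/(4t))` on `ℝ^n`. -/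
noncomputable def heatKernel (n : ℕ) (t : ℝ) (x : EuclideanSpace ℝ (Fin n)) : ℝ :=
  (4 * Real.pi * t) ^ (-(n : ℝ) / 2) * Real.exp (-‖x‖ ^ 2 / (4 * t))

/-- The gradient of the Gaussian heat kernel, `∇K_t(x) = -(x/(2t)) K_t(x)`. -/
noncomputable def gradHeatKernel (n : ℕ) (t : ℝ) (x : EuclideanSpace ℝ (Fin n)) :
    EuclideanSpace ℝ (Fin n) :=
  (-(1 / (2 * t)) * heatKernel n t x) • x

/-- Decay factor on each annulus `2^k √t ≤ ‖z‖ < 2^{k+1} √t`. -/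
noncomputable def auxA : ℕ → ℝ
  | 0 => 1
  | (k+1) => Real.exp (-(4:ℝ)^k / 8)

lemma auxA_pos : ∀ k, 0 < auxA k
  | 0 => one_pos
  | (_+1) => Real.exp_pos _

/-- The summand `2^{kn} a_k`. -/
noncomputable def auxB (n : ℕ) (k : ℕ) : ℝ := (2:ℝ)^(k*n) * auxA k

lemma auxB_pos (n k : ℕ) : 0 < auxB n k :=
  mul_pos (pow_pos two_pos _) (auxA_pos k)

lemma summable_auxB (n : ℕ) : Summable (auxB n) := by
  rw [← summable_nat_add_iff 1]
  apply summable_of_ratio_norm_eventually_le (r := 1/2) (by norm_num)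
  have h4 : Filter.Tendsto (fun k : ℕ => (3:ℝ) * 4^k / 8) Filter.atTop Filter.atTop := by
    apply Filter.Tendsto.atTop_div_const (by norm_num)
    exact (tendsto_pow_atTop_atTop_of_one_lt (by norm_num : (1:ℝ) < 4)).const_mul_atTop
      (by norm_num)
  have h5 := (Real.tendsto_exp_atTop.comp h4).eventually_ge_atTop ((2:ℝ)^(n+1))
  filter_upwards [h5] with k hk
  simp only [Function.comp] at hk
  have hb1 : auxB n (k+1) = (2:ℝ)^((k+1)*n) * Real.exp (-(4:ℝ)^k/8) := rfl
  have hb2 : auxB n (k+1+1) = (2:ℝ)^((k+2)*n) * Real.exp (-(4:ℝ)^(k+1)/8) := rfl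
  rw [Real.norm_eq_abs, Real.norm_eq_abs, abs_of_pos (auxB_pos n _),
    abs_of_pos (auxB_pos n _), hb1, hb2]
  have hsplit : Real.exp (-(4:ℝ)^(k+1)/8)
      = Real.exp (-(4:ℝ)^k/8) * Real.exp (-(3 * 4^k / 8)) := by
    rw [← Real.exp_add]; ring_nf
  have hpow : (2:ℝ)^((k+2)*n) = (2:ℝ)^((k+1)*n) * (2:ℝ)^n := by
    rw [← pow_add]; ring_nf
  rw [hsplit, hpow]
  have he2 : (0:ℝ) < Real.exp (-(3 * 4^k / 8)) := Real.exp_pos _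
  have hp1 : (0:ℝ) < (2:ℝ)^((k+1)*n) := pow_pos two_pos _
  have hp2 : (0:ℝ) < (2:ℝ)^n := pow_pos two_pos _
  have he3 : (0:ℝ) < Real.exp (-(4:ℝ)^k/8) := Real.exp_pos _
  have hkey : (2:ℝ)^n * Real.exp (-(3 * 4^k / 8)) ≤ 1/2 := by
    have he1 : Real.exp (-(3 * 4^k / 8)) * Real.exp (3 * 4^k / 8) = 1 := by
      rw [← Real.exp_add]; simp
    have h2n : (2:ℝ)^(n+1) = 2 * (2:ℝ)^n := by rw [pow_succ]; ring
    nlinarith [mul_le_mul_of_nonneg_left hk he2.le]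
  nlinarith [mul_pos hp1 he3]

/-- The basic scalar inequality: `s ≤ exp(s²/2)`. -/
lemma self_le_exp_half_sq (s : ℝ) : s ≤ Real.exp (s^2/2) := by
  have h := Real.add_one_le_exp (s^2/2)
  nlinarith [sq_nonneg (s - 1)]

lemma heatKernel_pos (n : ℕ) {t : ℝ} (ht : 0 < t) (z : EuclideanSpace ℝ (Fin n)) :
    0 < heatKernel n t z := by
  unfold heatKernel
  have : (0:ℝ) < 4 * Real.pi * t := by positivity
  positivity

/-- The key pointwise bound `√t ‖∇K_t(z)‖ ≤ (4πt)^{-n/2} exp(-‖z‖²/(8t))`. -/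
lemma sqrt_mul_norm_grad_le (n : ℕ) {t : ℝ} (ht : 0 < t) (z : EuclideanSpace ℝ (Fin n)) :
    Real.sqrt t * ‖gradHeatKernel n t z‖ ≤
      (4 * Real.pi * t) ^ (-(n:ℝ)/2) * Real.exp (-‖z‖^2 / (8*t)) := by
  have hst : 0 < Real.sqrt t := Real.sqrt_pos.2 ht
  have ht2 : Real.sqrt t ^ 2 = t := Real.sq_sqrt ht.le
  have hπ : (0:ℝ) < 4 * Real.pi * t := by positivity
  have hP : (0:ℝ) < (4 * Real.pi * t) ^ (-(n:ℝ)/2) := Real.rpow_pos_of_pos hπ _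
  set P := (4 * Real.pi * t) ^ (-(n:ℝ)/2) with hPdef
  set r := ‖z‖ with hrdef
  have hr0 : (0:ℝ) ≤ r := norm_nonneg z
  have hnorm : ‖gradHeatKernel n t z‖ = 1/(2*t) * heatKernel n t z * r := by
    rw [gradHeatKernel, norm_smul, Real.norm_eq_abs, abs_of_nonpos, ← hrdef]
    · have hK := heatKernel_pos n ht z
      ring
    · have hK := heatKernel_pos n ht z
      have h2t : (0:ℝ) < 1/(2*t) := by positivity
      nlinarith
  rw [hnorm, heatKernel, ← hPdef, ← hrdef]
  set s := r / (2 * Real.sqrt t) with hsdef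
  have hs0 : 0 ≤ s := by positivity
  have hrs : r = 2 * Real.sqrt t * s := by
    rw [hsdef]; field_simp
  have hsq1 : -r^2 / (4*t) = -s^2 := by
    rw [hrs]; field_simp; nlinarith
  have hsq2 : -r^2 / (8*t) = -(s^2/2) := by
    rw [hrs]; field_simp; nlinarith
  rw [hsq1, hsq2]
  have hkey : s * Real.exp (-s^2) ≤ Real.exp (-(s^2/2)) := by
    have h1 : Real.exp (-s^2) = Real.exp (-(s^2/2)) * Real.exp (-(s^2/2)) := by
      rw [← Real.exp_add]; ring_nf
    have h5 : (0:ℝ) < Real.exp (-(s^2/2)) := Real.exp_pos _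
    have h2 : s * Real.exp (-(s^2/2)) ≤ 1 := by
      have h3 : Real.exp (-(s^2/2)) * Real.exp (s^2/2) = 1 := by
        rw [← Real.exp_add]; simp
      have h4 := self_le_exp_half_sq s
      nlinarith
    calc s * Real.exp (-s^2) = (s * Real.exp (-(s^2/2))) * Real.exp (-(s^2/2)) := by
          rw [h1]; ring
      _ ≤ 1 * Real.exp (-(s^2/2)) := mul_le_mul_of_nonneg_right h2 h5.le
      _ = Real.exp (-(s^2/2)) := one_mul _
  have hlhs : Real.sqrt t * (1/(2*t) * (P * Real.exp (-s^2)) * r)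
      = P * (s * Real.exp (-s^2)) := by
    rw [hrs]
    rw [show Real.sqrt t * (1/(2*t) * (P * Real.exp (-s^2)) * (2 * Real.sqrt t * s))
        = (Real.sqrt t ^ 2 / t) * (P * (s * Real.exp (-s^2))) by ring, ht2, div_self ht.ne', one_mul]
  rw [hlhs]
  exact mul_le_mul_of_nonneg_left hkey hP.le

/-- Pointwise domination of the vertical heat maximal function by the
Hardy–Littlewood averages: `√t ∫ ‖∇K_t(x-y)‖ |f(y)| dy ≤ C · sup_{r>0} ⨍_{B(x,r)} |f|`. -/
theorem stmt2 (n : ℕ) (hn : 1 ≤ n) :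
    ∃ C : ℝ, 0 < C ∧
      ∀ (f : EuclideanSpace ℝ (Fin n) → ℝ), Measurable f →
        ∀ (x : EuclideanSpace ℝ (Fin n)) (t : ℝ), 0 < t →
          ENNReal.ofReal (Real.sqrt t) *
              (∫⁻ y, ENNReal.ofReal (‖gradHeatKernel n t (x - y)‖ * |f y|))
            ≤ ENNReal.ofReal C *
                ⨆ (r : ℝ) (_ : 0 < r),
                  (volume (ball x r))⁻¹ * ∫⁻ y in ball x r, ENNReal.ofReal |f y| := by
  classical
  set V₁ : ℝ≥0∞ := volume (ball (0 : EuclideanSpace ℝ (Fin n)) 1) with hV₁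
  have hV₁pos : 0 < V₁ := measure_ball_pos volume _ one_pos
  have hV₁top : V₁ < ⊤ := measure_ball_lt_top
  set c : ℝ := (4 * Real.pi) ^ (-(n:ℝ)/2) with hcdef
  have hc : 0 < c := Real.rpow_pos_of_pos (by positivity) _
  set B : ℝ := ∑' k, auxB n k with hBdef
  have hB : 0 < B := Summable.tsum_pos (summable_auxB n) (fun k => (auxB_pos n k).le) 0 (auxB_pos n 0)
  have hVt : 0 < V₁.toReal := ENNReal.toReal_pos hV₁pos.ne' hV₁top.ne
  refine ⟨c * B * V₁.toReal, by positivity, ?_⟩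
  intro f hf x t ht
  have hst : 0 < Real.sqrt t := Real.sqrt_pos.2 ht
  set M : ℝ≥0∞ := ⨆ (r : ℝ) (_ : 0 < r),
      (volume (ball x r))⁻¹ * ∫⁻ y in ball x r, ENNReal.ofReal |f y| with hM
  set ρ : ℕ → ℝ := fun k => 2^k * Real.sqrt t with hρ
  have hρpos : ∀ k, 0 < ρ k := fun k => by
    have : (0:ℝ) < (2:ℝ)^k := pow_pos two_pos k
    rw [hρ]; positivity
  set S : ℕ → Set (EuclideanSpace ℝ (Fin n)) := fun k =>
    Nat.casesOn k (ball x (ρ 0)) (fun m => ball x (ρ (m+1)) \ ball x (ρ m)) with hS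
  have hS0 : S 0 = ball x (ρ 0) := rfl
  have hSsucc : ∀ m, S (m+1) = ball x (ρ (m+1)) \ ball x (ρ m) := fun _ => rfl
  have hSsub : ∀ k, S k ⊆ ball x (ρ k) := by
    intro k
    cases k with
    | zero => rw [hS0]
    | succ m => rw [hSsucc]; exact Set.diff_subset
  -- covering
  have hcov : (Set.univ : Set (EuclideanSpace ℝ (Fin n))) = ⋃ k, S k := by
    apply Set.eq_of_subset_of_subset _ (Set.subset_univ _)
    intro y _
    have hex : ∃ k, y ∈ ball x (ρ k) := by
      obtain ⟨k, hk⟩ := pow_unbounded_of_one_lt (dist y x / Real.sqrt t)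
        (by norm_num : (1:ℝ) < 2)
      refine ⟨k, ?_⟩
      rw [mem_ball]
      rw [div_lt_iff₀ hst] at hk
      exact hk
    rw [Set.mem_iUnion]
    cases hfind : Nat.find hex with
    | zero =>
      have hspec := Nat.find_spec hex
      rw [hfind] at hspec
      exact ⟨0, by rw [hS0]; exact hspec⟩
    | succ m =>
      have hspec := Nat.find_spec hex
      rw [hfind] at hspec
      refine ⟨m+1, ?_⟩
      rw [hSsucc]
      exact ⟨hspec, Nat.find_min hex (by rw [hfind]; exact Nat.lt_succ_self m)⟩
  -- volume of balls
  haveI : Nontrivial (EuclideanSpace ℝ (Fin n)) :=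
    Module.nontrivial_of_finrank_pos (R := ℝ)
      (by rw [finrank_euclideanSpace_fin]; omega)
  have hballvol : ∀ k, volume (ball x (ρ k)) = ENNReal.ofReal ((ρ k)^n) * V₁ := by
    intro k
    rw [Measure.addHaar_ball volume x (hρpos k).le, finrank_euclideanSpace_fin]
  -- maximal function bound for each ball
  have hballM : ∀ k, (∫⁻ y in ball x (ρ k), ENNReal.ofReal |f y|)
      ≤ volume (ball x (ρ k)) * M := by
    intro k
    have h1 : (volume (ball x (ρ k)))⁻¹ * ∫⁻ y in ball x (ρ k), ENNReal.ofReal |f y| ≤ M := by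
      rw [hM]
      exact le_iSup₂ (f := fun (r : ℝ) (_ : 0 < r) =>
        (volume (ball x r))⁻¹ * ∫⁻ y in ball x r, ENNReal.ofReal |f y|) (ρ k) (hρpos k)
    have h0 : volume (ball x (ρ k)) ≠ 0 := (measure_ball_pos volume x (hρpos k)).ne'
    have htop : volume (ball x (ρ k)) ≠ ⊤ := measure_ball_lt_top.ne
    calc (∫⁻ y in ball x (ρ k), ENNReal.ofReal |f y|)
        = volume (ball x (ρ k)) *
            ((volume (ball x (ρ k)))⁻¹ * ∫⁻ y in ball x (ρ k), ENNReal.ofReal |f y|) := by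
          rw [← mul_assoc, ENNReal.mul_inv_cancel h0 htop, one_mul]
      _ ≤ volume (ball x (ρ k)) * M := mul_le_mul_right h1 _
  set Pt : ℝ := (4 * Real.pi * t) ^ (-(n:ℝ)/2) with hPt
  have hPtpos : 0 < Pt := Real.rpow_pos_of_pos (by positivity) _
  -- pointwise bound on each piece
  have hpoint : ∀ k, ∀ y ∈ S k,
      Real.sqrt t * (‖gradHeatKernel n t (x - y)‖ * |f y|) ≤ (Pt * auxA k) * |f y| := by
    intro k y hy
    have h1 := sqrt_mul_norm_grad_le n ht (x - y)
    have h2 : Real.exp (-‖x - y‖^2 / (8*t)) ≤ auxA k := by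
      cases k with
      | zero =>
        have hnn : (0:ℝ) ≤ ‖x - y‖^2 / (8*t) := by positivity
        have : -‖x - y‖^2 / (8*t) ≤ 0 := by
          rw [neg_div]; linarith
        simpa [auxA] using Real.exp_le_one_iff.2 this
      | succ m =>
        rw [hSsucc] at hy
        have hy2 : ρ m ≤ dist y x := by
          by_contra hcon
          exact hy.2 (mem_ball.2 (lt_of_not_ge hcon))
        have hdist : dist y x = ‖x - y‖ := by
          rw [dist_eq_norm, norm_sub_rev]
        have hd : (2:ℝ)^m * Real.sqrt t ≤ ‖x - y‖ := by
          rw [← hdist]; exact hy2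
        have h4m : ((2:ℝ)^m)^2 = (4:ℝ)^m := by
          rw [← pow_mul, mul_comm, pow_mul]; norm_num
        have hsq : (4:ℝ)^m * t ≤ ‖x - y‖^2 := by
          have hp : (0:ℝ) ≤ (2:ℝ)^m * Real.sqrt t := by positivity
          calc (4:ℝ)^m * t = ((2:ℝ)^m * Real.sqrt t)^2 := by
                rw [mul_pow, h4m, Real.sq_sqrt ht.le]
            _ ≤ ‖x - y‖^2 := pow_le_pow_left₀ hp hd 2
        have harg : -‖x - y‖^2 / (8*t) ≤ -(4:ℝ)^m / 8 := by
          rw [neg_div, neg_div, neg_le_neg_iff, div_le_div_iff₀ (by norm_num) (by positivity)]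
          nlinarith
        simpa [auxA] using Real.exp_le_exp.2 harg
    have h3 : Real.sqrt t * ‖gradHeatKernel n t (x - y)‖ ≤ Pt * auxA k :=
      le_trans h1 (mul_le_mul_of_nonneg_left h2 hPtpos.le)
    calc Real.sqrt t * (‖gradHeatKernel n t (x - y)‖ * |f y|)
        = (Real.sqrt t * ‖gradHeatKernel n t (x - y)‖) * |f y| := by ring
      _ ≤ (Pt * auxA k) * |f y| := mul_le_mul_of_nonneg_right h3 (abs_nonneg _)
  -- the constant computation
  have hconst : ∀ k, (Pt * auxA k) * (ρ k)^n = c * auxB n k := by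
    intro k
    have h1 : Pt = c * t^(-(n:ℝ)/2) := by
      rw [hPt, hcdef, ← Real.mul_rpow (by positivity) ht.le]
    have h2 : (ρ k)^n = 2^(k*n) * (Real.sqrt t)^n := by
      rw [hρ, mul_pow, ← pow_mul]
    have h3 : (Real.sqrt t)^n = t ^ ((n:ℝ)/2) := by
      rw [Real.sqrt_eq_rpow, ← Real.rpow_natCast (t ^ ((1:ℝ)/2)) n, ← Real.rpow_mul ht.le]
      congr 1
      ring
    have h4 : t^(-(n:ℝ)/2) * t^((n:ℝ)/2) = 1 := by
      rw [← Real.rpow_add ht, neg_div, neg_add_cancel, Real.rpow_zero]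
    rw [h1, h2, h3, auxB]
    linear_combination (c * auxA k * 2^(k*n)) * h4
  -- per-piece integral bound
  have perk : ∀ k,
      (∫⁻ y in S k, ENNReal.ofReal (Real.sqrt t * (‖gradHeatKernel n t (x - y)‖ * |f y|)))
        ≤ ENNReal.ofReal (c * auxB n k) * (V₁ * M) := by
    intro k
    have hPA : (0:ℝ) ≤ Pt * auxA k := (mul_pos hPtpos (auxA_pos k)).le
    have hmeas : Measurable fun y => ENNReal.ofReal ((Pt * auxA k) * |f y|) :=
      ((hf.abs).const_mul _).ennreal_ofReal
    have hmerge : ENNReal.ofReal (Pt * auxA k) * ENNReal.ofReal ((ρ k)^n)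
        = ENNReal.ofReal (c * auxB n k) := by
      rw [← ENNReal.ofReal_mul hPA, hconst k]
    calc (∫⁻ y in S k, ENNReal.ofReal (Real.sqrt t * (‖gradHeatKernel n t (x - y)‖ * |f y|)))
        ≤ ∫⁻ y in S k, ENNReal.ofReal ((Pt * auxA k) * |f y|) :=
          setLIntegral_mono hmeas fun y hy => ENNReal.ofReal_le_ofReal (hpoint k y hy)
      _ = ENNReal.ofReal (Pt * auxA k) * ∫⁻ y in S k, ENNReal.ofReal |f y| := by
          simp_rw [ENNReal.ofReal_mul hPA]
          exact lintegral_const_mul' _ _ ENNReal.ofReal_ne_top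
      _ ≤ ENNReal.ofReal (Pt * auxA k) * ∫⁻ y in ball x (ρ k), ENNReal.ofReal |f y| :=
          mul_le_mul_right (lintegral_mono_set (hSsub k)) _
      _ ≤ ENNReal.ofReal (Pt * auxA k) * (volume (ball x (ρ k)) * M) :=
          mul_le_mul_right (hballM k) _
      _ = (ENNReal.ofReal (Pt * auxA k) * ENNReal.ofReal ((ρ k)^n)) * (V₁ * M) := by
          rw [hballvol k]; ring
      _ = ENNReal.ofReal (c * auxB n k) * (V₁ * M) := by rw [hmerge]
  -- putting it together
  calc ENNReal.ofReal (Real.sqrt t) *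
        (∫⁻ y, ENNReal.ofReal (‖gradHeatKernel n t (x - y)‖ * |f y|))
      = ∫⁻ y, ENNReal.ofReal (Real.sqrt t * (‖gradHeatKernel n t (x - y)‖ * |f y|)) := by
        rw [← lintegral_const_mul' _ _ ENNReal.ofReal_ne_top]
        exact lintegral_congr fun y => by
          rw [ENNReal.ofReal_mul (Real.sqrt_nonneg t)]
    _ = ∫⁻ y in Set.univ,
          ENNReal.ofReal (Real.sqrt t * (‖gradHeatKernel n t (x - y)‖ * |f y|)) :=
        (setLIntegral_univ _).symm
    _ = ∫⁻ y in ⋃ k, S k,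
          ENNReal.ofReal (Real.sqrt t * (‖gradHeatKernel n t (x - y)‖ * |f y|)) := by
        rw [← hcov]
    _ ≤ ∑' k, ∫⁻ y in S k,
          ENNReal.ofReal (Real.sqrt t * (‖gradHeatKernel n t (x - y)‖ * |f y|)) :=
        lintegral_iUnion_le _ _
    _ ≤ ∑' k, ENNReal.ofReal (c * auxB n k) * (V₁ * M) := ENNReal.tsum_le_tsum perk
    _ = (∑' k, ENNReal.ofReal (c * auxB n k)) * (V₁ * M) := ENNReal.tsum_mul_right
    _ = ENNReal.ofReal (c * B) * (V₁ * M) := by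
        rw [← ENNReal.ofReal_tsum_of_nonneg (fun k => (mul_pos hc (auxB_pos n k)).le)
          ((summable_auxB n).mul_left c)]
        rw [hBdef, ← tsum_mul_left]
    _ = ENNReal.ofReal (c * B * V₁.toReal) * M := by
        rw [ENNReal.ofReal_mul (by positivity : (0:ℝ) ≤ c * B),
          ENNReal.ofReal_toReal hV₁top.ne]
        ring
end

section
/- Let n ≥ 1 be an integer, let s > 0, c > 0, and let p ∈ [1, ∞) with sp ≠ n. Then there exist constants c₁, C₁ > 0 such that for every k ∈ (0,1], c₁ · max(1, k^{s − n/p}) ≤ ( ∫_{{x ∈ ℝ^n : ‖x‖ ≥ 1}} ‖x‖^{−sp} e^{−c p k ‖x‖} dx )^{1/p} ≤ C₁ · max(1, k^{s − n/p}). In particular the L^p({‖x‖ ≥ 1}) norm of x ↦ ‖x‖^{−s} e^{−ck‖x‖} is comparable to 1 when sp > n and comparable to k^{s − n/p} when sp < n. -/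
open Set MeasureTheory
open scoped ENNReal

private lemma intOn_Ioi0 {α b : ℝ} (hα : -1 < α) (hb : 0 < b) :
    IntegrableOn (fun y : ℝ => y ^ α * Real.exp (-(b * y))) (Ioi 0) := by
  have h := integrableOn_rpow_mul_exp_neg_mul_rpow hα one_pos hb
  refine h.congr_fun (fun x hx => ?_) measurableSet_Ioi
  simp only [Real.rpow_one, neg_mul]

private lemma intOn_Ioi1 (α : ℝ) {b : ℝ} (hb : 0 < b) :
    IntegrableOn (fun y : ℝ => y ^ α * Real.exp (-(b * y))) (Ioi 1) := by
  have hg : IntegrableOn (fun y : ℝ => y ^ (max α 0) * Real.exp (-(b * y))) (Ioi 1) :=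
    (intOn_Ioi0 (lt_of_lt_of_le neg_one_lt_zero (le_max_right _ _)) hb).mono_set
      (Ioi_subset_Ioi zero_le_one)
  refine hg.integrable.mono' ?_ ?_
  · exact (Measurable.aestronglyMeasurable (by fun_prop))
  · filter_upwards [ae_restrict_mem measurableSet_Ioi] with y hy
    have hy1 : (1:ℝ) ≤ y := le_of_lt hy
    have hy0 : (0:ℝ) ≤ y := le_trans zero_le_one hy1
    rw [Real.norm_eq_abs, abs_of_nonneg (mul_nonneg (Real.rpow_nonneg hy0 _) (Real.exp_pos _).le)]
    exact mul_le_mul_of_nonneg_right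
      (Real.rpow_le_rpow_of_exponent_le hy1 (le_max_left _ _)) (Real.exp_pos _).le

private lemma pos_int1 (α : ℝ) {b : ℝ} (hb : 0 < b) :
    0 < ∫ y in Ioi (1:ℝ), y ^ α * Real.exp (-(b * y)) := by
  rw [setIntegral_pos_iff_support_of_nonneg_ae ?_ (intOn_Ioi1 α hb)]
  · refine lt_of_lt_of_le ?_ (measure_mono (?_ :
      Ioi (1:ℝ) ⊆ Function.support (fun y => y ^ α * Real.exp (-(b * y))) ∩ Ioi 1))
    · simp [Real.volume_Ioi]
    · intro y hy
      refine ⟨?_, hy⟩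
      have hy0 : (0:ℝ) < y := lt_trans one_pos hy
      exact (mul_pos (Real.rpow_pos_of_pos hy0 α) (Real.exp_pos _)).ne'
  · filter_upwards [ae_restrict_mem measurableSet_Ioi] with y hy
    exact mul_nonneg (Real.rpow_nonneg (le_of_lt (lt_trans one_pos hy)) _) (Real.exp_pos _).le

private lemma polar (n : ℕ) (hn : 1 ≤ n) (s q : ℝ) :
    (∫ x in {x : EuclideanSpace ℝ (Fin n) | 1 ≤ ‖x‖},
        ‖x‖ ^ (-s) * Real.exp (-(q * ‖x‖)))
      = (n * (volume (Metric.ball (0 : EuclideanSpace ℝ (Fin n)) 1)).toReal) *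
        ∫ y in Ioi (1:ℝ), y ^ ((n:ℝ) - 1 - s) * Real.exp (-(q * y)) := by
  haveI : NeZero n := ⟨by omega⟩
  set E := EuclideanSpace ℝ (Fin n)
  have hmeas : MeasurableSet {x : E | 1 ≤ ‖x‖} :=
    (isClosed_le continuous_const continuous_norm).measurableSet
  set f : ℝ → ℝ := (Ici (1:ℝ)).indicator (fun r => r ^ (-s) * Real.exp (-(q * r))) with hf
  have h1 : (∫ x in {x : E | 1 ≤ ‖x‖}, ‖x‖ ^ (-s) * Real.exp (-(q * ‖x‖)))
      = ∫ x : E, f ‖x‖ := by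
    rw [← integral_indicator hmeas]
    congr 1
  rw [h1, integral_fun_norm_addHaar volume f, finrank_euclideanSpace_fin]
  have h2 : (∫ y in Ioi (0:ℝ), y ^ (n - 1) • f y)
      = ∫ y in Ioi (1:ℝ), y ^ ((n:ℝ) - 1 - s) * Real.exp (-(q * y)) := by
    have hcongr : ∀ y ∈ Ioi (0:ℝ), y ^ (n - 1) • f y
        = (Ici (1:ℝ)).indicator (fun r => r ^ ((n:ℝ) - 1 - s) * Real.exp (-(q * r))) y := by
      intro y hy
      by_cases h : y ∈ Ici (1:ℝ)
      · have hy0 : (0:ℝ) < y := hy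
        simp only [hf, Set.indicator_of_mem h, smul_eq_mul]
        rw [← mul_assoc, ← Real.rpow_natCast y (n - 1), ← Real.rpow_add hy0]
        congr 2
        rw [Nat.cast_sub hn]
        push_cast
        ring
      · simp [hf, Set.indicator_of_notMem h]
    rw [setIntegral_congr_fun measurableSet_Ioi hcongr,
      setIntegral_indicator measurableSet_Ici]
    have hi : Ioi (0:ℝ) ∩ Ici 1 = Ici 1 :=
      Set.inter_eq_right.mpr (fun y hy => show (0:ℝ) < y from lt_of_lt_of_le one_pos hy)
    rw [hi, integral_Ici_eq_integral_Ioi]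
  rw [h2, nsmul_eq_mul, smul_eq_mul, mul_assoc]
  rfl

private lemma scale {α b k : ℝ} (hb : 0 < b) (hk : 0 < k) :
    (∫ y in Ioi (1:ℝ), y ^ α * Real.exp (-(b * k * y)))
      = k ^ (-(α + 1)) * ∫ u in Ioi k, u ^ α * Real.exp (-(b * u)) := by
  have hkα : k ^ α ≠ 0 := (Real.rpow_pos_of_pos hk α).ne'
  have h1 : ∀ y ∈ Ioi (1:ℝ), y ^ α * Real.exp (-(b * k * y))
      = k ^ (-α) * ((k * y) ^ α * Real.exp (-(b * (k * y)))) := by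
    intro y hy
    have hy0 : (0:ℝ) ≤ y := le_of_lt (lt_trans one_pos hy)
    rw [Real.mul_rpow hk.le hy0, Real.rpow_neg hk.le, show b * (k * y) = b * k * y by ring,
      ← mul_assoc, ← mul_assoc, inv_mul_cancel₀ hkα, one_mul]
  rw [setIntegral_congr_fun measurableSet_Ioi h1, integral_const_mul,
    integral_comp_mul_left_Ioi (fun u => u ^ α * Real.exp (-(b * u))) 1 hk, mul_one,
    smul_eq_mul, ← mul_assoc]
  congr 1
  rw [← Real.rpow_neg_one k, ← Real.rpow_add hk]
  congr 1
  ring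

/-- Two-sided estimate for the `L^p({‖x‖ ≥ 1})` norm of the weight
`x ↦ ‖x‖^{-s} e^{-ck‖x‖}`: it is comparable, uniformly in `k ∈ (0,1]`, to
`max(1, k^{s - n/p})`. -/
theorem stmt9 (n : ℕ) (hn : 1 ≤ n) (s c : ℝ) (hs : 0 < s) (hc : 0 < c)
    (p : ℝ) (hp : 1 ≤ p) (hsp : s * p ≠ n) :
    ∃ c₁ C₁ : ℝ, 0 < c₁ ∧ 0 < C₁ ∧
      ∀ k : ℝ, k ∈ Ioc (0 : ℝ) 1 →
        c₁ * max 1 (k ^ (s - n / p))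
            ≤ (∫ x in {x : EuclideanSpace ℝ (Fin n) | 1 ≤ ‖x‖},
                ‖x‖ ^ (-(s * p)) * Real.exp (-(c * p * k * ‖x‖))) ^ (1 / p) ∧
        (∫ x in {x : EuclideanSpace ℝ (Fin n) | 1 ≤ ‖x‖},
                ‖x‖ ^ (-(s * p)) * Real.exp (-(c * p * k * ‖x‖))) ^ (1 / p)
            ≤ C₁ * max 1 (k ^ (s - n / p)) := by
  have hp0 : 0 < p := lt_of_lt_of_le one_pos hp
  haveI : NeZero n := ⟨by omega⟩
  set E := EuclideanSpace ℝ (Fin n)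
  have hCnpos : 0 < (n : ℝ) * (volume (Metric.ball (0 : E) 1)).toReal := by
    refine mul_pos (by exact_mod_cast Nat.pos_of_ne_zero (by omega)) ?_
    refine ENNReal.toReal_pos (Metric.measure_ball_pos _ _ one_pos).ne' measure_ball_lt_top.ne
  set Cn : ℝ := (n : ℝ) * (volume (Metric.ball (0 : E) 1)).toReal with hCn
  set α : ℝ := (n:ℝ) - 1 - s * p with hαdef
  have hβ0 : 0 < c * p := mul_pos hc hp0
  have key : ∀ k : ℝ, (∫ x in {x : E | 1 ≤ ‖x‖},
        ‖x‖ ^ (-(s * p)) * Real.exp (-(c * p * k * ‖x‖)))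
      = Cn * ∫ y in Ioi (1:ℝ), y ^ α * Real.exp (-(c * p * k * y)) := by
    intro k
    exact polar n hn (s * p) (c * p * k)
  rcases hsp.lt_or_gt with hB | hA
  · -- case B : s * p < n, α > -1
    have hα1 : -1 < α := by rw [hαdef]; linarith
    set G : ℝ → ℝ := fun t => ∫ u in Ioi t, u ^ α * Real.exp (-(c * p * u)) with hGdef
    have hG0int : IntegrableOn (fun u : ℝ => u ^ α * Real.exp (-(c * p * u))) (Ioi 0) :=
      intOn_Ioi0 hα1 hβ0
    have hG1pos : 0 < G 1 := pos_int1 α hβ0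
    have hGmono : ∀ k : ℝ, k ∈ Ioc (0:ℝ) 1 → G 1 ≤ G k ∧ G k ≤ G 0 := by
      intro k hk
      constructor
      · refine setIntegral_mono_set (hG0int.mono_set (Ioi_subset_Ioi hk.1.le)) ?_
          ((Ioi_subset_Ioi hk.2).eventuallyLE)
        filter_upwards [ae_restrict_mem measurableSet_Ioi] with u hu
        exact mul_nonneg (Real.rpow_nonneg (le_of_lt (lt_trans hk.1 hu)) _) (Real.exp_pos _).le
      · refine setIntegral_mono_set hG0int ?_ ((Ioi_subset_Ioi hk.1.le).eventuallyLE)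
        filter_upwards [ae_restrict_mem measurableSet_Ioi] with u hu
        exact mul_nonneg (Real.rpow_nonneg hu.le _) (Real.exp_pos _).le
    have hsub : ∀ k : ℝ, k ∈ Ioc (0:ℝ) 1 →
        (∫ y in Ioi (1:ℝ), y ^ α * Real.exp (-(c * p * k * y)))
          = k ^ (s * p - (n:ℝ)) * G k := by
      intro k hk
      rw [scale hβ0 hk.1]
      have he : -(α + 1) = s * p - (n:ℝ) := by rw [hαdef]; ring
      rw [he]
    have hexp_le : s - (n:ℝ) / p ≤ 0 := by
      rw [sub_nonpos, le_div_iff₀ hp0]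
      exact hB.le
    have hG10 : G 1 ≤ G 0 := (hGmono 1 ⟨one_pos, le_rfl⟩).2
    refine ⟨(Cn * G 1) ^ (1/p), (Cn * G 0) ^ (1/p),
      Real.rpow_pos_of_pos (mul_pos hCnpos hG1pos) _,
      Real.rpow_pos_of_pos (mul_pos hCnpos (lt_of_lt_of_le hG1pos hG10)) _, ?_⟩
    intro k hk
    have hmax : max 1 (k ^ (s - (n:ℝ) / p)) = k ^ (s - (n:ℝ) / p) :=
      max_eq_right (Real.one_le_rpow_of_pos_of_le_one_of_nonpos hk.1 hk.2 hexp_le)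
    have hke : (0:ℝ) ≤ k ^ (s - (n:ℝ) / p) := (Real.rpow_pos_of_pos hk.1 _).le
    have hGk1 : G 1 ≤ G k := (hGmono k hk).1
    have hGk0 : G k ≤ G 0 := (hGmono k hk).2
    have hrw : (∫ x in {x : E | 1 ≤ ‖x‖},
          ‖x‖ ^ (-(s * p)) * Real.exp (-(c * p * k * ‖x‖))) ^ (1/p)
        = (Cn * G k) ^ (1/p) * k ^ (s - (n:ℝ) / p) := by
      rw [key k, hsub k hk,
        show Cn * (k ^ (s * p - (n:ℝ)) * G k) = (Cn * G k) * k ^ (s * p - (n:ℝ)) by ring,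
        Real.mul_rpow (mul_nonneg hCnpos.le (hG1pos.le.trans hGk1))
          (Real.rpow_pos_of_pos hk.1 _).le]
      congr 1
      rw [← Real.rpow_mul hk.1.le]
      congr 1
      field_simp
    rw [hmax, hrw]
    constructor
    · exact mul_le_mul_of_nonneg_right
        (Real.rpow_le_rpow (mul_pos hCnpos hG1pos).le
          (mul_le_mul_of_nonneg_left hGk1 hCnpos.le) (by positivity)) hke
    · exact mul_le_mul_of_nonneg_right
        (Real.rpow_le_rpow (mul_nonneg hCnpos.le (hG1pos.le.trans hGk1))
          (mul_le_mul_of_nonneg_left hGk0 hCnpos.le) (by positivity)) hke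
  · -- case A : n < s * p, α < -1
    have hα1 : α < -1 := by rw [hαdef]; linarith
    have hlowpos : 0 < ∫ y in Ioi (1:ℝ), y ^ α * Real.exp (-(c * p * y)) := pos_int1 α hβ0
    set low : ℝ := ∫ y in Ioi (1:ℝ), y ^ α * Real.exp (-(c * p * y)) with hlowdef
    set high : ℝ := ∫ y in Ioi (1:ℝ), y ^ α with hhighdef
    have hhighint : IntegrableOn (fun y : ℝ => y ^ α) (Ioi 1) :=
      integrableOn_Ioi_rpow_of_lt hα1 one_pos
    have hJle : ∀ k : ℝ, k ∈ Ioc (0:ℝ) 1 →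
        low ≤ (∫ y in Ioi (1:ℝ), y ^ α * Real.exp (-(c * p * k * y))) ∧
        (∫ y in Ioi (1:ℝ), y ^ α * Real.exp (-(c * p * k * y))) ≤ high := by
      intro k hk
      have hik : IntegrableOn (fun y : ℝ => y ^ α * Real.exp (-(c * p * k * y))) (Ioi 1) :=
        intOn_Ioi1 α (mul_pos hβ0 hk.1)
      constructor
      · refine setIntegral_mono_on (intOn_Ioi1 α hβ0) hik measurableSet_Ioi ?_
        intro y hy
        have hy0 : (0:ℝ) < y := lt_trans one_pos hy
        refine mul_le_mul_of_nonneg_left (Real.exp_le_exp.mpr ?_) (Real.rpow_nonneg hy0.le _)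
        have h1 : c * p * k * y ≤ c * p * y := by nlinarith [mul_nonneg (mul_pos hβ0 hy0).le (sub_nonneg.mpr hk.2)]
        linarith
      · refine setIntegral_mono_on hik hhighint measurableSet_Ioi ?_
        intro y hy
        have hy0 : (0:ℝ) < y := lt_trans one_pos hy
        have h1 : Real.exp (-(c * p * k * y)) ≤ 1 := by
          rw [Real.exp_le_one_iff]
          have : 0 ≤ c * p * k * y := mul_nonneg (mul_nonneg hβ0.le hk.1.le) hy0.le
          linarith
        calc y ^ α * Real.exp (-(c * p * k * y)) ≤ y ^ α * 1 :=
              mul_le_mul_of_nonneg_left h1 (Real.rpow_nonneg hy0.le _)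
          _ = y ^ α := mul_one _
    have h1k := hJle 1 ⟨one_pos, le_rfl⟩
    have hhighpos : 0 < high := lt_of_lt_of_le hlowpos (h1k.1.trans h1k.2)
    have hexp_ge : 0 ≤ s - (n:ℝ) / p := by
      rw [sub_nonneg]
      exact ((div_lt_iff₀ hp0).mpr hA).le
    refine ⟨(Cn * low) ^ (1/p), (Cn * high) ^ (1/p),
      Real.rpow_pos_of_pos (mul_pos hCnpos hlowpos) _,
      Real.rpow_pos_of_pos (mul_pos hCnpos hhighpos) _, ?_⟩
    intro k hk
    have hmax : max 1 (k ^ (s - (n:ℝ) / p)) = 1 :=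
      max_eq_left (Real.rpow_le_one hk.1.le hk.2 hexp_ge)
    rw [hmax, mul_one, mul_one, key k]
    constructor
    · exact Real.rpow_le_rpow (mul_pos hCnpos hlowpos).le
        (mul_le_mul_of_nonneg_left (hJle k hk).1 hCnpos.le) (by positivity)
    · exact Real.rpow_le_rpow (mul_nonneg hCnpos.le
          (hlowpos.le.trans (hJle k hk).1))
        (mul_le_mul_of_nonneg_left (hJle k hk).2 hCnpos.le) (by positivity)
end

section
/- Let n_i, n_j ≥ 3 be integers and let p satisfy n_i/(n_i − 1) < p ≤ n_j, with p′ = p/(p−1). Then sup_{0<k≤1} k · ( ∫_{{x ∈ ℝ^{n_i} : ‖x‖ ≥ 1}} ‖x‖^{−(n_i−1)p} e^{−pk‖x‖} dx )^{1/p} · ( ∫_{{y ∈ ℝ^{n_j} : ‖y‖ ≥ 1}} ‖y‖^{−(n_j−2)p′} e^{−p′k‖y‖} dy )^{1/p′} < ∞. -/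
open Set MeasureTheory
open scoped ENNReal

lemma polar_set_integral (n : ℕ) (hn : 0 < n) (g : ℝ → ℝ) :
    ∫ x in {x : EuclideanSpace ℝ (Fin n) | 1 ≤ ‖x‖}, g ‖x‖
      = ((n : ℝ) * (volume (Metric.ball (0 : EuclideanSpace ℝ (Fin n)) 1)).toReal)
        * ∫ r in Ici (1:ℝ), r ^ (n - 1) * g r := by
  haveI : Nontrivial (EuclideanSpace ℝ (Fin n)) :=
    Module.nontrivial_of_finrank_pos (R := ℝ) (by simp [hn])
  have hS : MeasurableSet {x : EuclideanSpace ℝ (Fin n) | 1 ≤ ‖x‖} :=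
    measurableSet_le measurable_const measurable_norm
  have h1 : ∫ x in {x : EuclideanSpace ℝ (Fin n) | 1 ≤ ‖x‖}, g ‖x‖
      = ∫ x : EuclideanSpace ℝ (Fin n), (Ici (1:ℝ)).indicator g ‖x‖ := by
    rw [← integral_indicator hS]
    apply integral_congr_ae
    filter_upwards with x
    by_cases hx : (1:ℝ) ≤ ‖x‖ <;> simp [Set.indicator_apply, hx]
  have h2 : ∫ r in Ioi (0:ℝ), r ^ (n-1) • (Ici (1:ℝ)).indicator g r
      = ∫ r in Ici (1:ℝ), r ^ (n-1) * g r := by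
    have key : ∀ r : ℝ, r ^ (n-1) • (Ici (1:ℝ)).indicator g r
        = (Ici (1:ℝ)).indicator (fun r => r ^ (n-1) * g r) r := by
      intro r; by_cases hr : (1:ℝ) ≤ r <;> simp [Set.indicator_apply, hr]
    simp_rw [key]
    rw [setIntegral_indicator measurableSet_Ici]
    have h3 : Ioi (0:ℝ) ∩ Ici 1 = Ici 1 :=
      inter_eq_right.mpr fun r hr => show (0:ℝ) < r from lt_of_lt_of_le one_pos hr
    rw [h3]
  rw [h1, integral_fun_norm_addHaar (volume : Measure (EuclideanSpace ℝ (Fin n)))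
    ((Ici (1:ℝ)).indicator g), finrank_euclideanSpace_fin, nsmul_eq_mul, smul_eq_mul, h2]
  rw [measureReal_def]
  ring


/-- The key quantitative `H₃(k)` estimate: for integers `n_i, n_j ≥ 3` and
`n_i/(n_i-1) < p ≤ n_j`, with `p' = p/(p-1)`, the quantity
`k · ‖ω₁‖_{L^p} · ‖ω₂‖_{L^{p'}}` is bounded uniformly in `0 < k ≤ 1`. -/
theorem stmt10 (ni nj : ℕ) (hni : 3 ≤ ni) (hnj : 3 ≤ nj) (p : ℝ)
    (hp₁ : (ni : ℝ) / ((ni : ℝ) - 1) < p) (hp₂ : p ≤ (nj : ℝ)) :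
    ∃ C : ℝ,
      ∀ k : ℝ, k ∈ Ioc (0 : ℝ) 1 →
        k * (∫ x in {x : EuclideanSpace ℝ (Fin ni) | 1 ≤ ‖x‖},
              ‖x‖ ^ (-(((ni : ℝ) - 1) * p)) * Real.exp (-(p * k * ‖x‖))) ^ (1 / p)
          * (∫ y in {y : EuclideanSpace ℝ (Fin nj) | 1 ≤ ‖y‖},
              ‖y‖ ^ (-(((nj : ℝ) - 2) * (p / (p - 1))))
                * Real.exp (-((p / (p - 1)) * k * ‖y‖))) ^ (1 / (p / (p - 1)))
          ≤ C := by
  have hni3 : (3:ℝ) ≤ ni := by exact_mod_cast hni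
  have hnj3 : (3:ℝ) ≤ nj := by exact_mod_cast hnj
  have hden : (0:ℝ) < (ni:ℝ) - 1 := by linarith
  have hp1 : 1 < p := lt_trans ((one_lt_div hden).mpr (by linarith)) hp₁
  have hnip : (ni:ℝ) < ((ni:ℝ) - 1) * p := by
    have := (div_lt_iff₀ hden).mp hp₁; linarith
  set q := p / (p - 1) with hq
  have hq1 : 1 < q := (one_lt_div (by linarith)).mpr (by linarith)
  have hq0 : 0 < q := lt_trans one_pos hq1
  have hqnj : (nj:ℝ) ≤ ((nj:ℝ) - 1) * q := by
    rw [hq, mul_div_assoc', le_div_iff₀ (by linarith : (0:ℝ) < p - 1)]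
    nlinarith
  -- constants
  set c₁ : ℝ := (ni : ℝ) * (volume (Metric.ball (0 : EuclideanSpace ℝ (Fin ni)) 1)).toReal
    with hc₁
  set c₂ : ℝ := (nj : ℝ) * (volume (Metric.ball (0 : EuclideanSpace ℝ (Fin nj)) 1)).toReal
    with hc₂
  have hc₁0 : 0 ≤ c₁ := mul_nonneg (Nat.cast_nonneg _) ENNReal.toReal_nonneg
  have hc₂0 : 0 ≤ c₂ := mul_nonneg (Nat.cast_nonneg _) ENNReal.toReal_nonneg
  set b₁ : ℝ := (ni:ℝ) - 1 + -(((ni:ℝ) - 1) * p) with hb₁def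
  have hb₁ : b₁ < -1 := by rw [hb₁def]; linarith
  set D₁ : ℝ := ∫ r in Ici (1:ℝ), r ^ b₁ with hD₁
  have hD₁int : IntegrableOn (fun r : ℝ => r ^ b₁) (Ici (1:ℝ)) :=
    (integrableOn_Ici_iff_integrableOn_Ioi (f := fun r : ℝ => r ^ b₁)).mpr (integrableOn_Ioi_rpow_of_lt hb₁ one_pos)
  have hD₁0 : 0 ≤ D₁ :=
    setIntegral_nonneg measurableSet_Ici fun r hr => Real.rpow_nonneg (by linarith [mem_Ici.mp hr]) _
  set m : ℝ := max ((nj:ℝ) - ((nj:ℝ) - 2) * q) 1 with hm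
  have hm0 : 0 < m := lt_of_lt_of_le one_pos (le_max_right _ _)
  have hmq : m ≤ q := by
    refine max_le ?_ hq1.le
    have : ((nj:ℝ) - 1) * q = ((nj:ℝ) - 2) * q + q := by ring
    linarith
  have hΓ0 : 0 ≤ c₂ * Real.Gamma m := mul_nonneg hc₂0 (Real.Gamma_nonneg_of_nonneg hm0.le)
  refine ⟨(c₁ * D₁) ^ (1/p) * ((c₂ * Real.Gamma m) ^ (1/q) * (1/q) ^ (m/q)), ?_⟩
  rintro k ⟨hk0, hk1⟩
  -- polar coordinates for both integrals
  have hP₁ : (∫ x in {x : EuclideanSpace ℝ (Fin ni) | 1 ≤ ‖x‖},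
        ‖x‖ ^ (-(((ni : ℝ) - 1) * p)) * Real.exp (-(p * k * ‖x‖)))
      = c₁ * ∫ r in Ici (1:ℝ), r ^ (ni - 1) *
          (r ^ (-(((ni : ℝ) - 1) * p)) * Real.exp (-(p * k * r))) :=
    polar_set_integral ni (by omega)
      (fun r => r ^ (-(((ni : ℝ) - 1) * p)) * Real.exp (-(p * k * r)))
  have hP₂ : (∫ y in {y : EuclideanSpace ℝ (Fin nj) | 1 ≤ ‖y‖},
        ‖y‖ ^ (-(((nj : ℝ) - 2) * q)) * Real.exp (-(q * k * ‖y‖)))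
      = c₂ * ∫ r in Ici (1:ℝ), r ^ (nj - 1) *
          (r ^ (-(((nj : ℝ) - 2) * q)) * Real.exp (-(q * k * r))) :=
    polar_set_integral nj (by omega)
      (fun r => r ^ (-(((nj : ℝ) - 2) * q)) * Real.exp (-(q * k * r)))
  -- bound the first radial integral
  have hrad₁ : (∫ r in Ici (1:ℝ), r ^ (ni - 1) *
      (r ^ (-(((ni : ℝ) - 1) * p)) * Real.exp (-(p * k * r)))) ≤ D₁ := by
    refine integral_mono_of_nonneg ?_ hD₁int ?_
    · filter_upwards [ae_restrict_mem measurableSet_Ici] with r hr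
      have hr0 : (0:ℝ) < r := lt_of_lt_of_le one_pos hr
      positivity
    · filter_upwards [ae_restrict_mem measurableSet_Ici] with r hr
      have hr0 : (0:ℝ) < r := lt_of_lt_of_le one_pos hr
      have hcast : ((ni - 1 : ℕ) : ℝ) = (ni:ℝ) - 1 := by
        rw [Nat.cast_sub (by omega)]; norm_num
      have he : Real.exp (-(p * k * r)) ≤ 1 := by
        rw [← Real.exp_zero]
        apply Real.exp_le_exp.mpr
        have : 0 ≤ p * k * r := by positivity
        linarith
      calc r ^ (ni - 1) * (r ^ (-(((ni : ℝ) - 1) * p)) * Real.exp (-(p * k * r)))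
          = r ^ b₁ * Real.exp (-(p * k * r)) := by
            rw [← Real.rpow_natCast r (ni - 1), hcast, ← mul_assoc,
              ← Real.rpow_add hr0, hb₁def]
        _ ≤ r ^ b₁ * 1 := mul_le_mul_of_nonneg_left he (Real.rpow_nonneg hr0.le _)
        _ = r ^ b₁ := mul_one _
  -- bound the second radial integral via the Gamma function
  have hqk0 : 0 < q * k := mul_pos hq0 hk0
  have hHint : IntegrableOn (fun r : ℝ => r ^ (m - 1) * Real.exp (-(q * k * r))) (Ioi (0:ℝ)) := by
    have := integrableOn_rpow_mul_exp_neg_mul_rpow (s := m - 1) (p := 1) (b := q * k)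
      (by linarith) one_pos hqk0
    simpa only [Real.rpow_one, neg_mul] using this
  have hIci_sub : Ici (1:ℝ) ⊆ Ioi (0:ℝ) := fun r hr => show (0:ℝ) < r from lt_of_lt_of_le one_pos hr
  have hrad₂ : (∫ r in Ici (1:ℝ), r ^ (nj - 1) *
      (r ^ (-(((nj : ℝ) - 2) * q)) * Real.exp (-(q * k * r))))
      ≤ ∫ r in Ioi (0:ℝ), r ^ (m - 1) * Real.exp (-(q * k * r)) := by
    have step1 : (∫ r in Ici (1:ℝ), r ^ (nj - 1) *
        (r ^ (-(((nj : ℝ) - 2) * q)) * Real.exp (-(q * k * r))))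
        ≤ ∫ r in Ici (1:ℝ), r ^ (m - 1) * Real.exp (-(q * k * r)) := by
      refine integral_mono_of_nonneg ?_ (hHint.mono_set hIci_sub) ?_
      · filter_upwards [ae_restrict_mem measurableSet_Ici] with r hr
        have hr0 : (0:ℝ) < r := lt_of_lt_of_le one_pos hr
        positivity
      · filter_upwards [ae_restrict_mem measurableSet_Ici] with r hr
        have hr0 : (0:ℝ) < r := lt_of_lt_of_le one_pos hr
        have hcast : ((nj - 1 : ℕ) : ℝ) = (nj:ℝ) - 1 := by
          rw [Nat.cast_sub (by omega)]; norm_num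
        have hexp : (nj:ℝ) - 1 + -(((nj : ℝ) - 2) * q) ≤ m - 1 := by
          have := le_max_left ((nj:ℝ) - ((nj:ℝ) - 2) * q) 1
          linarith
        calc r ^ (nj - 1) * (r ^ (-(((nj : ℝ) - 2) * q)) * Real.exp (-(q * k * r)))
            = r ^ ((nj:ℝ) - 1 + -(((nj : ℝ) - 2) * q)) * Real.exp (-(q * k * r)) := by
              rw [← Real.rpow_natCast r (nj - 1), hcast, ← mul_assoc, ← Real.rpow_add hr0]
          _ ≤ r ^ (m - 1) * Real.exp (-(q * k * r)) :=
              mul_le_mul_of_nonneg_right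
                (Real.rpow_le_rpow_of_exponent_le hr hexp) (Real.exp_nonneg _)
    have step2 : (∫ r in Ici (1:ℝ), r ^ (m - 1) * Real.exp (-(q * k * r)))
        ≤ ∫ r in Ioi (0:ℝ), r ^ (m - 1) * Real.exp (-(q * k * r)) := by
      refine setIntegral_mono_set hHint ?_ (HasSubset.Subset.eventuallyLE hIci_sub)
      filter_upwards [ae_restrict_mem measurableSet_Ioi] with r hr
      have hr0 : (0:ℝ) < r := hr
      positivity
    exact step1.trans step2
  have hGval : (∫ r in Ioi (0:ℝ), r ^ (m - 1) * Real.exp (-(q * k * r)))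
      = (1/(q*k)) ^ m * Real.Gamma m :=
    Real.integral_rpow_mul_exp_neg_mul_Ioi hm0 hqk0
  -- nonnegativity of the two integrals
  have hS₁ : MeasurableSet {x : EuclideanSpace ℝ (Fin ni) | 1 ≤ ‖x‖} :=
    measurableSet_le measurable_const measurable_norm
  have hS₂ : MeasurableSet {x : EuclideanSpace ℝ (Fin nj) | 1 ≤ ‖x‖} :=
    measurableSet_le measurable_const measurable_norm
  have hI₁0 : 0 ≤ ∫ x in {x : EuclideanSpace ℝ (Fin ni) | 1 ≤ ‖x‖},
      ‖x‖ ^ (-(((ni : ℝ) - 1) * p)) * Real.exp (-(p * k * ‖x‖)) :=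
    setIntegral_nonneg hS₁ fun x hx => by
      have : (0:ℝ) < ‖x‖ := lt_of_lt_of_le one_pos hx
      positivity
  have hI₂0 : 0 ≤ ∫ y in {y : EuclideanSpace ℝ (Fin nj) | 1 ≤ ‖y‖},
      ‖y‖ ^ (-(((nj : ℝ) - 2) * q)) * Real.exp (-(q * k * ‖y‖)) :=
    setIntegral_nonneg hS₂ fun y hy => by
      have : (0:ℝ) < ‖y‖ := lt_of_lt_of_le one_pos hy
      positivity
  -- combine
  have hineq₁ : (∫ x in {x : EuclideanSpace ℝ (Fin ni) | 1 ≤ ‖x‖},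
      ‖x‖ ^ (-(((ni : ℝ) - 1) * p)) * Real.exp (-(p * k * ‖x‖))) ≤ c₁ * D₁ := by
    rw [hP₁]; exact mul_le_mul_of_nonneg_left hrad₁ hc₁0
  have hineq₂ : (∫ y in {y : EuclideanSpace ℝ (Fin nj) | 1 ≤ ‖y‖},
      ‖y‖ ^ (-(((nj : ℝ) - 2) * q)) * Real.exp (-(q * k * ‖y‖)))
      ≤ (c₂ * Real.Gamma m) * (1/(q*k)) ^ m := by
    rw [hP₂]
    calc c₂ * ∫ r in Ici (1:ℝ), r ^ (nj - 1) *
          (r ^ (-(((nj : ℝ) - 2) * q)) * Real.exp (-(q * k * r)))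
        ≤ c₂ * ((1/(q*k)) ^ m * Real.Gamma m) := by
          rw [← hGval]; exact mul_le_mul_of_nonneg_left hrad₂ hc₂0
      _ = (c₂ * Real.Gamma m) * (1/(q*k)) ^ m := by ring
  have h1 : (∫ x in {x : EuclideanSpace ℝ (Fin ni) | 1 ≤ ‖x‖},
      ‖x‖ ^ (-(((ni : ℝ) - 1) * p)) * Real.exp (-(p * k * ‖x‖))) ^ (1/p)
      ≤ (c₁ * D₁) ^ (1/p) :=
    Real.rpow_le_rpow hI₁0 hineq₁ (by positivity)
  have h2 : (∫ y in {y : EuclideanSpace ℝ (Fin nj) | 1 ≤ ‖y‖},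
      ‖y‖ ^ (-(((nj : ℝ) - 2) * q)) * Real.exp (-(q * k * ‖y‖))) ^ (1/q)
      ≤ ((c₂ * Real.Gamma m) * (1/(q*k)) ^ m) ^ (1/q) :=
    Real.rpow_le_rpow hI₂0 hineq₂ (by positivity)
  have h3 : ((c₂ * Real.Gamma m) * (1/(q*k)) ^ m) ^ (1/q)
      = (c₂ * Real.Gamma m) ^ (1/q) * ((1/(q*k)) ^ m) ^ (1/q) :=
    Real.mul_rpow hΓ0 (Real.rpow_nonneg (by positivity) _)
  have h4 : k * ((1/(q*k)) ^ m) ^ (1/q) ≤ (1/q) ^ (m/q) := by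
    have e2 : ((1/(q*k)) ^ m) ^ (1/q) = (1/(q*k)) ^ (m/q) := by
      rw [← Real.rpow_mul (by positivity), mul_one_div]
    have e3 : (1:ℝ)/(q*k) = (1/q) * (1/k) := by
      field_simp
    have e4 : ((1:ℝ)/k) ^ (m/q) = k ^ (-(m/q)) := by
      rw [one_div, Real.inv_rpow hk0.le, ← Real.rpow_neg hk0.le]
    have e5 : k * k ^ (-(m/q)) = k ^ (1 - m/q) := by
      nth_rewrite 1 [← Real.rpow_one k]
      rw [← Real.rpow_add hk0, sub_eq_add_neg]
    have e6 : k ^ (1 - m/q) ≤ 1 :=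
      Real.rpow_le_one hk0.le hk1 (by rw [sub_nonneg, div_le_one hq0]; exact hmq)
    calc k * ((1/(q*k)) ^ m) ^ (1/q)
        = k * ((1/q) ^ (m/q) * k ^ (-(m/q))) := by rw [e2, e3,
            Real.mul_rpow (by positivity) (by positivity), e4]
      _ = (1/q) ^ (m/q) * (k * k ^ (-(m/q))) := by ring
      _ = (1/q) ^ (m/q) * k ^ (1 - m/q) := by rw [e5]
      _ ≤ (1/q) ^ (m/q) * 1 := mul_le_mul_of_nonneg_left e6 (by positivity)
      _ = (1/q) ^ (m/q) := mul_one _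
  calc k * (∫ x in {x : EuclideanSpace ℝ (Fin ni) | 1 ≤ ‖x‖},
          ‖x‖ ^ (-(((ni : ℝ) - 1) * p)) * Real.exp (-(p * k * ‖x‖))) ^ (1/p)
        * (∫ y in {y : EuclideanSpace ℝ (Fin nj) | 1 ≤ ‖y‖},
          ‖y‖ ^ (-(((nj : ℝ) - 2) * q)) * Real.exp (-(q * k * ‖y‖))) ^ (1/q)
      ≤ (k * (c₁ * D₁) ^ (1/p)) * ((c₂ * Real.Gamma m) ^ (1/q) * ((1/(q*k)) ^ m) ^ (1/q)) := by
        rw [← h3]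
        exact mul_le_mul (mul_le_mul_of_nonneg_left h1 hk0.le) h2
          (Real.rpow_nonneg hI₂0 _) (by positivity)
    _ = (c₁ * D₁) ^ (1/p) * (c₂ * Real.Gamma m) ^ (1/q)
        * (k * ((1/(q*k)) ^ m) ^ (1/q)) := by ring
    _ ≤ (c₁ * D₁) ^ (1/p) * (c₂ * Real.Gamma m) ^ (1/q) * ((1/q) ^ (m/q)) := by
        refine mul_le_mul_of_nonneg_left h4 ?_
        exact mul_nonneg (Real.rpow_nonneg (mul_nonneg hc₁0 hD₁0) _)
          (Real.rpow_nonneg hΓ0 _)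
    _ = (c₁ * D₁) ^ (1/p) * ((c₂ * Real.Gamma m) ^ (1/q) * (1/q) ^ (m/q)) := by ring
end

section
/- Let n ≥ 3 be an integer and 1 < p < ∞. For f ∈ L^p(ℝ^n), define Λ̃f(x) = (1+‖x‖)^{1−n} ∫_{ℝ^n} (1+‖y‖)^{1−n} f(y) dy. Then the following are equivalent: (i) n/(n−1) < p < n; (ii) there exists a constant C > 0 such that for every f ∈ L^p(ℝ^n) the function y ↦ (1+‖y‖)^{1−n} f(y) is integrable, Λ̃f ∈ L^p(ℝ^n), and ‖Λ̃f‖_{L^p} ≤ C ‖f‖_{L^p}. -/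
open Set MeasureTheory Metric Module
open scoped ENNReal

namespace Stmt11Aux

lemma omega_cont (n : ℕ) :
    Continuous (fun x : EuclideanSpace ℝ (Fin n) => (1 + ‖x‖) ^ ((1 : ℝ) - n)) := by
  apply Continuous.rpow_const (by continuity)
  intro x; left; positivity

lemma nnnorm_rpow (n : ℕ) {r : ℝ} (hr : 0 ≤ r) (x : EuclideanSpace ℝ (Fin n)) :
    ((‖(1 + ‖x‖) ^ ((1 : ℝ) - n)‖₊ : ℝ≥0∞)) ^ r
      = ENNReal.ofReal ((1 + ‖x‖) ^ (-(r * ((n : ℝ) - 1)))) := by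
  rw [← enorm_eq_nnnorm, ← ofReal_norm, ENNReal.ofReal_rpow_of_nonneg (norm_nonneg _) hr]
  congr 1
  rw [Real.norm_of_nonneg (by positivity), ← Real.rpow_mul (by positivity)]
  congr 1
  ring

lemma memLp_omega (n : ℕ) {r : ℝ} (hr : 0 < r) (h : (n : ℝ) < r * ((n : ℝ) - 1)) :
    MemLp (fun x : EuclideanSpace ℝ (Fin n) => (1 + ‖x‖) ^ ((1 : ℝ) - n))
      (ENNReal.ofReal r) volume := by
  refine ⟨(omega_cont n).aestronglyMeasurable, ?_⟩
  rw [eLpNorm_eq_lintegral_rpow_enorm_toReal (by simp [ENNReal.ofReal_eq_zero, not_le, hr])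
    ENNReal.ofReal_ne_top, ENNReal.toReal_ofReal hr.le]
  refine ENNReal.rpow_lt_top_of_nonneg (by positivity) ?_
  simp_rw [enorm_eq_nnnorm, nnnorm_rpow n hr.le]
  have h' : (finrank ℝ (EuclideanSpace ℝ (Fin n)) : ℝ) < r * ((n : ℝ) - 1) := by
    rwa [finrank_euclideanSpace_fin]
  exact (finite_integral_one_add_norm h').ne



lemma real_key (n : ℕ) {s : ℝ} (hs0 : 0 ≤ s) (hsn : s ≤ (n : ℝ)) (k : ℕ) :
    (4 : ℝ) ^ (-(n : ℝ)) * ((2 : ℝ) ^ n - 1)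
      ≤ ((2 : ℝ) ^ (k + 2)) ^ (-s) * (((2 : ℝ) ^ (k + 1)) ^ n - ((2 : ℝ) ^ k) ^ n) := by
  have h2k : (1 : ℝ) ≤ (2 : ℝ) ^ k := one_le_pow₀ one_le_two
  have hk : (0 : ℝ) < 2 ^ k := by positivity
  have e1 : ((2 : ℝ) ^ (k + 1)) ^ n - ((2 : ℝ) ^ k) ^ n = ((2 : ℝ) ^ k) ^ n * ((2 : ℝ) ^ n - 1) := by
    ring
  rw [e1, ← mul_assoc]
  have hc : (0 : ℝ) ≤ (2 : ℝ) ^ n - 1 := by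
    have : (1 : ℝ) ≤ 2 ^ n := one_le_pow₀ one_le_two
    linarith
  refine mul_le_mul_of_nonneg_right ?_ hc
  have step1 : ((2 : ℝ) ^ k) ^ s ≤ ((2 : ℝ) ^ k) ^ ((n : ℝ)) :=
    Real.rpow_le_rpow_of_exponent_le h2k hsn
  have e2 : ((2 : ℝ) ^ k) ^ ((n : ℝ)) = ((2 : ℝ) ^ k) ^ n := Real.rpow_natCast _ n
  have e3 : ((2 : ℝ) ^ (k + 2)) ^ (-s) * ((2 : ℝ) ^ k) ^ s = (4 : ℝ) ^ (-s) := by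
    have h4 : ((2 : ℝ) ^ (k + 2)) = (2 : ℝ) ^ k * 4 := by ring
    have hne : ((2 : ℝ) ^ k) ^ s ≠ 0 := (Real.rpow_pos_of_pos hk s).ne'
    rw [h4, Real.mul_rpow hk.le (by norm_num), Real.rpow_neg hk.le, Real.rpow_neg (by norm_num)]
    field_simp
  calc (4 : ℝ) ^ (-(n : ℝ)) ≤ (4 : ℝ) ^ (-s) :=
        Real.rpow_le_rpow_of_exponent_le (by norm_num) (by linarith)
    _ = ((2 : ℝ) ^ (k + 2)) ^ (-s) * ((2 : ℝ) ^ k) ^ s := e3.symm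
    _ ≤ ((2 : ℝ) ^ (k + 2)) ^ (-s) * ((2 : ℝ) ^ k) ^ n := by
        rw [← e2]
        exact mul_le_mul_of_nonneg_left step1 (by positivity)

lemma div_top (n : ℕ) (hn : 1 ≤ n) {s : ℝ} (hs0 : 0 ≤ s) (hsn : s ≤ (n : ℝ)) :
    ∫⁻ x : EuclideanSpace ℝ (Fin n), ENNReal.ofReal ((1 + ‖x‖) ^ (-s)) = ∞ := by
  set E := EuclideanSpace ℝ (Fin n) with hE
  have hfr : finrank ℝ E = n := finrank_euclideanSpace_fin
  haveI : Nontrivial E := Module.nontrivial_of_finrank_pos (R := ℝ) (by rw [hfr]; omega)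
  set v := volume (ball (0 : E) 1) with hv
  have hv0 : v ≠ 0 := (measure_ball_pos volume 0 one_pos).ne'
  have hvt : v ≠ ∞ := measure_ball_lt_top.ne
  set A : ℕ → Set E := fun k => ball (0 : E) (2 ^ (k + 1)) \ ball 0 (2 ^ k) with hA
  have hmeasA : ∀ k, MeasurableSet (A k) := fun k => measurableSet_ball.diff measurableSet_ball
  have hkey : ∀ j k : ℕ, j < k → Disjoint (A j) (A k) := by
    intro j k hjk
    rw [Set.disjoint_left]
    rintro x ⟨hx1, -⟩ ⟨-, hx4⟩
    rw [mem_ball_zero_iff] at hx1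
    refine hx4 ?_
    rw [mem_ball_zero_iff]
    exact lt_of_lt_of_le hx1 (pow_le_pow_right₀ one_le_two hjk)
  have hdisj : Pairwise (Function.onFun Disjoint A) := by
    intro j k hjk
    rcases hjk.lt_or_gt with h | h
    · exact hkey _ _ h
    · exact (hkey _ _ h).symm
  have hvol : ∀ k : ℕ, volume (A k)
      = ENNReal.ofReal (((2 : ℝ) ^ (k + 1)) ^ n - ((2 : ℝ) ^ k) ^ n) * v := by
    intro k
    have hsub : ball (0 : E) (2 ^ k) ⊆ ball 0 (2 ^ (k + 1)) :=
      ball_subset_ball (pow_le_pow_right₀ one_le_two (Nat.le_succ k))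
    have hb : ∀ m : ℕ, volume (ball (0 : E) (2 ^ m)) = ENNReal.ofReal (((2:ℝ) ^ m) ^ n) * v := by
      intro m
      rw [Measure.addHaar_ball volume _ (by positivity : (0:ℝ) ≤ 2 ^ m), hfr, ← hv]
    rw [hA]
    rw [measure_diff hsub measurableSet_ball.nullMeasurableSet measure_ball_lt_top.ne,
      hb (k + 1), hb k, ENNReal.ofReal_sub _ (by positivity),
      ENNReal.sub_mul (fun _ _ => hvt)]
  have hc0 : ENNReal.ofReal ((4 : ℝ) ^ (-(n : ℝ)) * ((2 : ℝ) ^ n - 1)) * v ≠ 0 := by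
    refine mul_ne_zero ?_ hv0
    rw [Ne, ENNReal.ofReal_eq_zero, not_le]
    have h1 : (1 : ℝ) ≤ (2 : ℝ) ^ n := one_le_pow₀ one_le_two
    have h2 : (1 : ℝ) < (2 : ℝ) ^ n := by
      calc (1:ℝ) < 2 := one_lt_two
      _ ≤ 2 ^ n := le_self_pow₀ one_le_two (by omega)
    have : (0 : ℝ) < (4 : ℝ) ^ (-(n : ℝ)) := Real.rpow_pos_of_pos (by norm_num) _
    nlinarith
  have hlow : ∀ k : ℕ, ENNReal.ofReal ((4 : ℝ) ^ (-(n : ℝ)) * ((2 : ℝ) ^ n - 1)) * v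
      ≤ ∫⁻ x in A k, ENNReal.ofReal ((1 + ‖x‖) ^ (-s)) := by
    intro k
    have h1 : ∀ x ∈ A k,
        ENNReal.ofReal (((2 : ℝ) ^ (k + 2)) ^ (-s)) ≤ ENNReal.ofReal ((1 + ‖x‖) ^ (-s)) := by
      intro x hx
      apply ENNReal.ofReal_le_ofReal
      have hx1 : ‖x‖ < 2 ^ (k + 1) := by
        have := hx.1; rwa [mem_ball_zero_iff] at this
      have h2 : (1 : ℝ) ≤ 2 ^ (k + 1) := one_le_pow₀ one_le_two
      apply Real.rpow_le_rpow_of_nonpos (by positivity) ?_ (by linarith)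
      have : (2 : ℝ) ^ (k + 2) = 2 ^ (k + 1) + 2 ^ (k + 1) := by ring
      linarith
    calc ENNReal.ofReal ((4 : ℝ) ^ (-(n : ℝ)) * ((2 : ℝ) ^ n - 1)) * v
        ≤ ENNReal.ofReal (((2 : ℝ) ^ (k + 2)) ^ (-s)
            * (((2 : ℝ) ^ (k + 1)) ^ n - ((2 : ℝ) ^ k) ^ n)) * v := by
          exact mul_le_mul_left (ENNReal.ofReal_le_ofReal (real_key n hs0 hsn k)) v
      _ = ENNReal.ofReal (((2 : ℝ) ^ (k + 2)) ^ (-s)) * volume (A k) := by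
          rw [hvol k, ENNReal.ofReal_mul (by positivity), mul_assoc]
      _ = ∫⁻ _ in A k, ENNReal.ofReal (((2 : ℝ) ^ (k + 2)) ^ (-s)) :=
          (setLIntegral_const _ _).symm
      _ ≤ ∫⁻ x in A k, ENNReal.ofReal ((1 + ‖x‖) ^ (-s)) := setLIntegral_mono' (hmeasA k) h1
  refine top_le_iff.mp ?_
  calc (⊤ : ℝ≥0∞)
      = ∑' _ : ℕ, ENNReal.ofReal ((4 : ℝ) ^ (-(n : ℝ)) * ((2 : ℝ) ^ n - 1)) * v :=
        (ENNReal.tsum_const_eq_top_of_ne_zero hc0).symm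
    _ ≤ ∑' k, ∫⁻ x in A k, ENNReal.ofReal ((1 + ‖x‖) ^ (-s)) := ENNReal.tsum_le_tsum hlow
    _ = ∫⁻ x in ⋃ k, A k, ENNReal.ofReal ((1 + ‖x‖) ^ (-s)) :=
        (lintegral_iUnion hmeasA hdisj _).symm
    _ ≤ ∫⁻ x, ENNReal.ofReal ((1 + ‖x‖) ^ (-s)) :=
        lintegral_mono' Measure.restrict_le_self le_rfl



lemma not_memLp_omega (n : ℕ) (hn : 1 ≤ n) {r : ℝ} (hr : 0 < r) (h : r * ((n : ℝ) - 1) ≤ n) :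
    ¬ MemLp (fun x : EuclideanSpace ℝ (Fin n) => (1 + ‖x‖) ^ ((1 : ℝ) - n))
      (ENNReal.ofReal r) volume := by
  intro hmem
  have h2 := hmem.2
  rw [eLpNorm_eq_lintegral_rpow_enorm_toReal (by simp [ENNReal.ofReal_eq_zero, not_le, hr])
    ENNReal.ofReal_ne_top, ENNReal.toReal_ofReal hr.le] at h2
  simp only [enorm_eq_nnnorm] at h2
  have hfin : ∫⁻ x : EuclideanSpace ℝ (Fin n),
      ((‖(1 + ‖x‖) ^ ((1 : ℝ) - n)‖₊ : ℝ≥0∞)) ^ r ≠ ∞ := by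
    intro htop
    rw [htop, ENNReal.top_rpow_of_pos (by positivity)] at h2
    exact (lt_irrefl _ h2).elim
  apply hfin
  have hs0 : 0 ≤ r * ((n : ℝ) - 1) := by
    apply mul_nonneg hr.le
    have : (1 : ℝ) ≤ (n : ℝ) := by exact_mod_cast hn
    linarith
  calc ∫⁻ x : EuclideanSpace ℝ (Fin n), ((‖(1 + ‖x‖) ^ ((1 : ℝ) - n)‖₊ : ℝ≥0∞)) ^ r
      = ∫⁻ x : EuclideanSpace ℝ (Fin n),
          ENNReal.ofReal ((1 + ‖x‖) ^ (-(r * ((n : ℝ) - 1)))) := by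
        simp_rw [nnnorm_rpow n hr.le]
    _ = ∞ := div_top n hn hs0 h

lemma sup_balls (n : ℕ) (g : EuclideanSpace ℝ (Fin n) → ℝ≥0∞) (hg : Measurable g) :
    (⨆ k : ℕ, ∫⁻ x in ball (0 : EuclideanSpace ℝ (Fin n)) (k : ℝ), g x) = ∫⁻ x, g x := by
  have h1 : ∀ k : ℕ, ∫⁻ x in ball (0 : EuclideanSpace ℝ (Fin n)) (k : ℝ), g x
      = ∫⁻ x, (ball (0 : EuclideanSpace ℝ (Fin n)) (k : ℝ)).indicator g x := fun k =>
    (lintegral_indicator measurableSet_ball g).symm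
  simp_rw [h1]
  rw [← lintegral_iSup (fun k => hg.indicator measurableSet_ball)]
  · congr 1
    funext x
    apply le_antisymm
    · exact iSup_le fun k => Set.indicator_le_self _ _ x
    · have hx : x ∈ ball (0 : EuclideanSpace ℝ (Fin n)) ((⌊‖x‖⌋₊ + 1 : ℕ) : ℝ) := by
        rw [mem_ball_zero_iff]
        push_cast
        exact Nat.lt_floor_add_one _
      calc g x = (ball (0 : EuclideanSpace ℝ (Fin n)) ((⌊‖x‖⌋₊ + 1 : ℕ) : ℝ)).indicator g x :=
            (Set.indicator_of_mem hx g).symm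
        _ ≤ _ := le_iSup (fun k => (ball (0 : EuclideanSpace ℝ (Fin n)) ((k : ℕ) : ℝ)).indicator g x)
            (⌊‖x‖⌋₊ + 1)
  · intro i j hij
    exact Set.indicator_le_indicator_of_subset
      (ball_subset_ball (by exact_mod_cast hij)) (fun x => zero_le)



lemma forward (n : ℕ) (hn : 3 ≤ n) (p : ℝ) (hp : 1 < p)
    (h1 : (n : ℝ) / ((n : ℝ) - 1) < p) (h2 : p < (n : ℝ)) :
    ∃ C : ℝ, 0 < C ∧
      ∀ f : EuclideanSpace ℝ (Fin n) → ℝ, MemLp f (ENNReal.ofReal p) volume →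
        Integrable (fun y => (1 + ‖y‖) ^ ((1 : ℝ) - n) * f y) volume ∧
        MemLp (fun x : EuclideanSpace ℝ (Fin n) => (1 + ‖x‖) ^ ((1 : ℝ) - n) *
            ∫ y, (1 + ‖y‖) ^ ((1 : ℝ) - n) * f y) (ENNReal.ofReal p) volume ∧
        eLpNorm (fun x : EuclideanSpace ℝ (Fin n) => (1 + ‖x‖) ^ ((1 : ℝ) - n) *
            ∫ y, (1 + ‖y‖) ^ ((1 : ℝ) - n) * f y) (ENNReal.ofReal p) volume
          ≤ ENNReal.ofReal C * eLpNorm f (ENNReal.ofReal p) volume := by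
  set ω : EuclideanSpace ℝ (Fin n) → ℝ := fun x => (1 + ‖x‖) ^ ((1 : ℝ) - n) with hω
  have hn3 : (3 : ℝ) ≤ (n : ℝ) := by exact_mod_cast hn
  set q : ℝ := p / (p - 1) with hq
  have hpq : p.HolderConjugate q := Real.HolderConjugate.conjExponent hp
  have hp0 : 0 < p := hpq.pos
  have hq1 : 1 < q := hpq.symm.lt
  have hq0 : 0 < q := hpq.symm.pos
  have hP : (n : ℝ) < p * ((n : ℝ) - 1) := by
    rw [div_lt_iff₀ (by linarith : (0:ℝ) < (n : ℝ) - 1)] at h1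
    linarith
  have hQ : (n : ℝ) < q * ((n : ℝ) - 1) := by
    rw [hq, div_mul_eq_mul_div, lt_div_iff₀ (by linarith : (0:ℝ) < p - 1)]
    nlinarith
  have hωp : MemLp ω (ENNReal.ofReal p) volume := memLp_omega n hp0 hP
  have hωq : MemLp ω (ENNReal.ofReal q) volume := memLp_omega n hq0 hQ
  have hPne0 : (ENNReal.ofReal p) ≠ 0 := by simp [ENNReal.ofReal_eq_zero, not_le, hp0]
  have hPnetop : (ENNReal.ofReal p) ≠ ∞ := ENNReal.ofReal_ne_top
  set A : ℝ := (∫ x, ‖ω x‖ ^ p ∂volume) ^ (1 / p) with hA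
  set B : ℝ := (∫ x, ‖ω x‖ ^ q ∂volume) ^ (1 / q) with hB
  have hA0 : 0 ≤ A := Real.rpow_nonneg (integral_nonneg fun x => by positivity) _
  have hB0 : 0 ≤ B := Real.rpow_nonneg (integral_nonneg fun x => by positivity) _
  refine ⟨A * B + 1, by positivity, fun f hf => ?_⟩
  have hexp : 1 / (1 : ℝ≥0∞) = 1 / ENNReal.ofReal p + 1 / ENNReal.ofReal q := by
    rw [one_div, one_div, one_div, inv_one, ← ENNReal.ofReal_inv_of_pos hq0,
      ← ENNReal.ofReal_inv_of_pos hp0, ← ENNReal.ofReal_add (by positivity) (by positivity),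
      hpq.inv_add_inv_eq_one, ENNReal.ofReal_one]
  have hint : Integrable (fun y => ω y * f y) volume := by
    have hs : Integrable (f • ω) volume := memLp_one_iff_integrable.mp (hωq.smul hf (hpqr := ⟨by simpa [one_div] using hexp.symm⟩))
    have heq2 : (f • ω) = fun y => ω y * f y := by
      funext y; simp [smul_eq_mul, mul_comm]
    rwa [heq2] at hs
  set c : ℝ := ∫ y, ω y * f y with hc
  have heq : (fun x => ω x * c) = c • ω := by
    funext x; simp [smul_eq_mul, mul_comm]
  refine ⟨hint, ?_, ?_⟩
  · rw [show (fun x : EuclideanSpace ℝ (Fin n) => ω x * ∫ y, ω y * f y) = c • ω from heq]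
    exact hωp.const_smul c
  · rw [show (fun x : EuclideanSpace ℝ (Fin n) => ω x * ∫ y, ω y * f y) = c • ω from heq,
      eLpNorm_const_smul]
    have hAeq : eLpNorm ω (ENNReal.ofReal p) volume
        = ENNReal.ofReal A := by
      rw [hωp.eLpNorm_eq_integral_rpow_norm hPne0 hPnetop, ENNReal.toReal_ofReal hp0.le, hA,
        one_div]
    have hFeq : eLpNorm f (ENNReal.ofReal p) volume
        = ENNReal.ofReal ((∫ x, ‖f x‖ ^ p ∂volume) ^ (1 / p)) := by
      rw [hf.eLpNorm_eq_integral_rpow_norm hPne0 hPnetop, ENNReal.toReal_ofReal hp0.le, one_div]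
    set Nf : ℝ := (∫ x, ‖f x‖ ^ p ∂volume) ^ (1 / p) with hNf
    have hNf0 : 0 ≤ Nf := Real.rpow_nonneg (integral_nonneg fun x => by positivity) _
    have hcb : |c| ≤ B * Nf := by
      calc |c| ≤ ∫ y, ‖ω y * f y‖ ∂volume := by
            rw [hc, ← Real.norm_eq_abs]
            exact norm_integral_le_integral_norm _
        _ = ∫ y, ‖ω y‖ * ‖f y‖ ∂volume := by simp [norm_mul]
        _ ≤ B * Nf := integral_mul_norm_le_Lp_mul_Lq hpq.symm hωq hf
    rw [hAeq, hFeq, Real.enorm_eq_ofReal_abs c,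
      ← ENNReal.ofReal_mul (abs_nonneg c), ← ENNReal.ofReal_mul (by positivity)]
    apply ENNReal.ofReal_le_ofReal
    nlinarith [abs_nonneg c]



lemma cont_rpow (n : ℕ) (t : ℝ) :
    Continuous (fun x : EuclideanSpace ℝ (Fin n) => (1 + ‖x‖) ^ t) := by
  apply Continuous.rpow_const (by continuity)
  intro x; left; positivity

lemma back_a (n : ℕ) (hn : 3 ≤ n) (p : ℝ) (hp : 1 < p) (C : ℝ)
    (hC : ∀ f : EuclideanSpace ℝ (Fin n) → ℝ, MemLp f (ENNReal.ofReal p) volume →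
      Integrable (fun y => (1 + ‖y‖) ^ ((1 : ℝ) - n) * f y) volume ∧
      MemLp (fun x : EuclideanSpace ℝ (Fin n) => (1 + ‖x‖) ^ ((1 : ℝ) - n) *
          ∫ y, (1 + ‖y‖) ^ ((1 : ℝ) - n) * f y) (ENNReal.ofReal p) volume ∧
      eLpNorm (fun x : EuclideanSpace ℝ (Fin n) => (1 + ‖x‖) ^ ((1 : ℝ) - n) *
          ∫ y, (1 + ‖y‖) ^ ((1 : ℝ) - n) * f y) (ENNReal.ofReal p) volume
        ≤ ENNReal.ofReal C * eLpNorm f (ENNReal.ofReal p) volume)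
    (hple : p ≤ (n : ℝ) / ((n : ℝ) - 1)) : False := by
  set E := EuclideanSpace ℝ (Fin n) with hE
  set ω : E → ℝ := fun x => (1 + ‖x‖) ^ ((1 : ℝ) - n) with hω
  have hn3 : (3 : ℝ) ≤ (n : ℝ) := by exact_mod_cast hn
  have hp0 : (0 : ℝ) < p := lt_trans zero_lt_one hp
  set f : E → ℝ := (ball (0 : E) 1).indicator (fun _ => (1 : ℝ)) with hf
  obtain ⟨h1, h2, -⟩ := hC f
    (memLp_indicator_const _ measurableSet_ball 1 (Or.inr measure_ball_lt_top.ne))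
  have heqf : (fun y => ω y * f y) = (ball (0 : E) 1).indicator ω := by
    funext y
    by_cases hy : y ∈ ball (0 : E) 1
    · simp [hf, Set.indicator_of_mem hy]
    · simp [hf, Set.indicator_of_notMem hy]
  rw [heqf] at h1
  have hio : IntegrableOn ω (ball (0 : E) 1) volume :=
    (integrable_indicator_iff measurableSet_ball).mp h1
  set c : ℝ := ∫ y, ω y * f y with hc
  have hcball : c = ∫ y in ball (0 : E) 1, ω y := by
    rw [hc, heqf, integral_indicator measurableSet_ball]
  have hc0 : 0 < c := by
    have hlb : ∀ x ∈ ball (0 : E) 1, (2 : ℝ) ^ ((1 : ℝ) - n) ≤ ω x := by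
      intro x hx
      rw [mem_ball_zero_iff] at hx
      exact Real.rpow_le_rpow_of_nonpos (by positivity) (by linarith) (by linarith)
    have := setIntegral_ge_of_const_le measurableSet_ball measure_ball_lt_top.ne hlb hio
    have hpos : (0 : ℝ) < (2 : ℝ) ^ ((1 : ℝ) - (n : ℝ)) * (volume (ball (0 : E) 1)).toReal := by
      apply mul_pos (Real.rpow_pos_of_pos two_pos _)
      exact ENNReal.toReal_pos (measure_ball_pos volume (0 : E) one_pos).ne'
        measure_ball_lt_top.ne
    rw [hcball]
    simp only [smul_eq_mul, Measure.real] at this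
    linarith
  have hmem : MemLp ω (ENNReal.ofReal p) volume := by
    have heq2 : (fun x : E => ω x * ∫ y, ω y * f y) = c • ω := by
      funext x; simp [smul_eq_mul, mul_comm, hc]
    rw [heq2] at h2
    have := h2.const_smul c⁻¹
    rwa [smul_smul, inv_mul_cancel₀ hc0.ne', one_smul] at this
  exact not_memLp_omega n (by omega) hp0
    (by
      rw [le_div_iff₀ (by linarith : (0:ℝ) < (n : ℝ) - 1)] at hple
      linarith) hmem

lemma back_b (n : ℕ) (hn : 3 ≤ n) (p : ℝ) (hp : 1 < p) (C : ℝ)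
    (hC : ∀ f : EuclideanSpace ℝ (Fin n) → ℝ, MemLp f (ENNReal.ofReal p) volume →
      Integrable (fun y => (1 + ‖y‖) ^ ((1 : ℝ) - n) * f y) volume ∧
      MemLp (fun x : EuclideanSpace ℝ (Fin n) => (1 + ‖x‖) ^ ((1 : ℝ) - n) *
          ∫ y, (1 + ‖y‖) ^ ((1 : ℝ) - n) * f y) (ENNReal.ofReal p) volume ∧
      eLpNorm (fun x : EuclideanSpace ℝ (Fin n) => (1 + ‖x‖) ^ ((1 : ℝ) - n) *
          ∫ y, (1 + ‖y‖) ^ ((1 : ℝ) - n) * f y) (ENNReal.ofReal p) volume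
        ≤ ENNReal.ofReal C * eLpNorm f (ENNReal.ofReal p) volume)
    (hnp : (n : ℝ) ≤ p) : False := by
  set E := EuclideanSpace ℝ (Fin n) with hE
  set ω : E → ℝ := fun x => (1 + ‖x‖) ^ ((1 : ℝ) - n) with hω
  have hn3 : (3 : ℝ) ≤ (n : ℝ) := by exact_mod_cast hn
  have hp0 : (0 : ℝ) < p := lt_trans zero_lt_one hp
  have hPne0 : (ENNReal.ofReal p) ≠ 0 := by simp [ENNReal.ofReal_eq_zero, not_le, hp0]
  set g : E → ℝ≥0∞ := fun x => ENNReal.ofReal ((1 + ‖x‖) ^ (-(n : ℝ))) with hg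
  have hgmeas : Measurable g := ((cont_rpow n (-(n : ℝ))).measurable).ennreal_ofReal
  set J : ℕ → ℝ≥0∞ := fun k => ∫⁻ x in ball (0 : E) (k : ℝ), g x with hJ
  have hJtop : (⨆ k, J k) = ∞ := by
    rw [hJ]
    simp only []
    rw [sup_balls n g hgmeas, hg]
    exact div_top n (by omega) (by positivity) le_rfl
  have hJfin : ∀ k, J k ≠ ∞ := by
    intro k
    have : J k ≤ volume (ball (0 : E) (k : ℝ)) := by
      rw [hJ]
      calc ∫⁻ x in ball (0 : E) (k : ℝ), g x ≤ ∫⁻ _ in ball (0 : E) (k : ℝ), 1 := by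
            apply setLIntegral_mono' measurableSet_ball
            intro x _
            rw [hg]
            simp only []
            rw [← ENNReal.ofReal_one]
            exact ENNReal.ofReal_le_ofReal (Real.rpow_le_one_of_one_le_of_nonpos
              (by linarith [norm_nonneg x]) (by linarith))
        _ = volume (ball (0 : E) (k : ℝ)) := by rw [setLIntegral_const, one_mul]
    exact (lt_of_le_of_lt this measure_ball_lt_top).ne
  set a : ℝ≥0∞ := eLpNorm ω (ENNReal.ofReal p) volume with ha
  have hane : a ≠ 0 := by
    rw [ha, Ne, eLpNorm_eq_zero_iff (cont_rpow n ((1:ℝ) - n)).aestronglyMeasurable hPne0]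
    intro h
    rw [Filter.EventuallyEq, ae_iff] at h
    have huniv : {x : E | ¬ ω x = (0 : E → ℝ) x} = univ := by
      ext x
      simp only [mem_setOf_eq, mem_univ, iff_true, Pi.zero_apply, hω]
      have : (0:ℝ) < (1 + ‖x‖) ^ ((1:ℝ) - n) := Real.rpow_pos_of_pos (by positivity) _
      exact this.ne'
    rw [huniv] at h
    have hpos : (0 : ℝ≥0∞) < volume (univ : Set E) :=
      lt_of_lt_of_le (measure_ball_pos volume (0 : E) one_pos) (measure_mono (subset_univ _))
    rw [h] at hpos
    exact lt_irrefl _ hpos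
  have hafin : a ≠ ∞ := by
    rw [ha]
    exact (memLp_omega n hp0 (by nlinarith)).2.ne
  have hbound : ∀ k : ℕ, J k ≤ (ENNReal.ofReal C / a) ^ (p / (p - 1)) := by
    intro k
    set fk : E → ℝ := (ball (0 : E) (k : ℝ)).indicator (fun y => (1 + ‖y‖) ^ (-(1 : ℝ)))
      with hfk
    have hfkmem : MemLp fk (ENNReal.ofReal p) volume := by
      apply MemLp.of_le (memLp_indicator_const (ENNReal.ofReal p)
        (measurableSet_ball : MeasurableSet (ball (0:E) (k:ℝ))) (1:ℝ)
        (Or.inr measure_ball_lt_top.ne))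
        (((cont_rpow n (-(1:ℝ))).aestronglyMeasurable).indicator measurableSet_ball)
      apply Filter.Eventually.of_forall
      intro y
      by_cases hy : y ∈ ball (0 : E) (k : ℝ)
      · rw [Set.indicator_of_mem hy, Set.indicator_of_mem hy]
        simp only [Real.norm_eq_abs, norm_one]
        rw [abs_of_nonneg (by positivity)]
        exact Real.rpow_le_one_of_one_le_of_nonpos (by linarith [norm_nonneg y]) (by norm_num)
      · rw [Set.indicator_of_notMem hy, Set.indicator_of_notMem hy]
    obtain ⟨h1, h2, h3⟩ := hC fk hfkmem
    have heqf : (fun y => ω y * fk y)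
        = (ball (0 : E) (k : ℝ)).indicator (fun y => (1 + ‖y‖) ^ (-(n : ℝ))) := by
      funext y
      by_cases hy : y ∈ ball (0 : E) (k : ℝ)
      · rw [hfk]
        simp only [Set.indicator_of_mem hy]
        rw [hω]
        simp only []
        rw [← Real.rpow_add (by positivity)]
        congr 1
        ring
      · rw [hfk]
        simp only [Set.indicator_of_notMem hy, mul_zero]
    rw [heqf] at h1
    have hii : IntegrableOn (fun y : E => (1 + ‖y‖) ^ (-(n : ℝ))) (ball (0 : E) (k : ℝ))
        volume := (integrable_indicator_iff measurableSet_ball).mp h1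
    set c : ℝ := ∫ y, ω y * fk y with hc
    have hc0 : 0 ≤ c := by
      rw [hc, heqf]
      apply integral_nonneg
      intro y
      apply Set.indicator_nonneg
      intro z _
      positivity
    have hcJ : ENNReal.ofReal c = J k := by
      rw [hc, heqf, integral_indicator measurableSet_ball,
        ofReal_integral_eq_lintegral_ofReal hii
          (Filter.Eventually.of_forall fun y => by positivity)]
    -- LHS of h3
    have hLHS : eLpNorm (fun x : E => ω x * ∫ y, ω y * fk y) (ENNReal.ofReal p) volume
        = J k * a := by
      have heq2 : (fun x : E => ω x * ∫ y, ω y * fk y) = c • ω := by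
        funext x; simp [smul_eq_mul, mul_comm, hc]
      rw [heq2, eLpNorm_const_smul, ← ha, Real.enorm_eq_ofReal_abs, abs_of_nonneg hc0, hcJ]
    -- RHS bound
    have hRHS : eLpNorm fk (ENNReal.ofReal p) volume ≤ (J k) ^ (1 / p) := by
      rw [eLpNorm_eq_lintegral_rpow_enorm_toReal hPne0 ENNReal.ofReal_ne_top,
        ENNReal.toReal_ofReal hp0.le]
      apply ENNReal.rpow_le_rpow ?_ (by positivity)
      have hpt : ∀ x : E, ((‖fk x‖₊ : ℝ≥0∞)) ^ p
          ≤ (ball (0 : E) (k : ℝ)).indicator g x := by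
        intro x
        by_cases hx : x ∈ ball (0 : E) (k : ℝ)
        · rw [Set.indicator_of_mem hx, hfk]
          simp only [Set.indicator_of_mem hx]
          rw [← enorm_eq_nnnorm, ← ofReal_norm, ENNReal.ofReal_rpow_of_nonneg (norm_nonneg _) hp0.le,
            Real.norm_of_nonneg (by positivity), ← Real.rpow_mul (by positivity), hg]
          apply ENNReal.ofReal_le_ofReal
          apply Real.rpow_le_rpow_of_exponent_le (by linarith [norm_nonneg x])
          nlinarith
        · rw [Set.indicator_of_notMem hx, hfk]
          simp only [Set.indicator_of_notMem hx]
          rw [nnnorm_zero]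
          rw [ENNReal.coe_zero, ENNReal.zero_rpow_of_pos hp0]
      calc ∫⁻ x, ((‖fk x‖₊ : ℝ≥0∞)) ^ p ∂volume
          ≤ ∫⁻ x, (ball (0 : E) (k : ℝ)).indicator g x ∂volume := lintegral_mono hpt
        _ = J k := by rw [lintegral_indicator measurableSet_ball]
    rw [hLHS] at h3
    have h4 : J k * a ≤ ENNReal.ofReal C * (J k) ^ (1 / p) :=
      le_trans h3 (mul_le_mul_right hRHS _)
    by_cases hJ0 : J k = 0
    · rw [hJ0]; exact zero_le
    -- cancel (J k)^(1/p)
    have hsplit : J k = (J k) ^ (1 / p) * (J k) ^ ((p - 1) / p) := by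
      rw [← ENNReal.rpow_add _ _ hJ0 (hJfin k)]
      rw [show 1 / p + (p - 1) / p = 1 by field_simp; ring]
      rw [ENNReal.rpow_one]
    have hne1 : (J k) ^ (1 / p) ≠ 0 := by
      intro h'
      rcases ENNReal.rpow_eq_zero_iff.mp h' with ⟨h0, -⟩ | ⟨ht, -⟩
      · exact hJ0 h0
      · exact hJfin k ht
    have hne2 : (J k) ^ (1 / p) ≠ ∞ := by
      intro h'
      rcases ENNReal.rpow_eq_top_iff.mp h' with ⟨h0, -⟩ | ⟨ht, -⟩
      · exact hJ0 h0
      · exact hJfin k ht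
    have h5 : (J k) ^ ((p - 1) / p) * a ≤ ENNReal.ofReal C := by
      have h6 : (J k) ^ (1 / p) * ((J k) ^ ((p - 1) / p) * a)
          ≤ (J k) ^ (1 / p) * ENNReal.ofReal C := by
        calc (J k) ^ (1 / p) * ((J k) ^ ((p - 1) / p) * a)
            = J k * a := by rw [← mul_assoc, ← hsplit]
          _ ≤ ENNReal.ofReal C * (J k) ^ (1 / p) := h4
          _ = (J k) ^ (1 / p) * ENNReal.ofReal C := mul_comm _ _
      exact (ENNReal.mul_le_mul_iff_right hne1 hne2).mp h6
    have h7 : (J k) ^ ((p - 1) / p) ≤ ENNReal.ofReal C / a := by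
      rw [ENNReal.le_div_iff_mul_le (Or.inl hane) (Or.inl hafin)]
      exact h5
    calc J k = ((J k) ^ ((p - 1) / p)) ^ (p / (p - 1)) := by
          rw [← ENNReal.rpow_mul]
          rw [show (p - 1) / p * (p / (p - 1)) = 1 by
            rw [div_mul_div_comm, mul_comm (p - 1) p]
            exact div_self (ne_of_gt (by nlinarith))]
          rw [ENNReal.rpow_one]
      _ ≤ (ENNReal.ofReal C / a) ^ (p / (p - 1)) :=
          ENNReal.rpow_le_rpow h7 (by apply div_nonneg <;> linarith)
  have hfin : (ENNReal.ofReal C / a) ^ (p / (p - 1)) ≠ ∞ := by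
    apply ENNReal.rpow_ne_top_of_nonneg (by apply div_nonneg <;> linarith)
    exact (ENNReal.div_lt_top ENNReal.ofReal_ne_top hane).ne
  have := iSup_le hbound
  rw [hJtop] at this
  exact hfin (top_le_iff.mp this)

end Stmt11Aux

open Set MeasureTheory
open scoped ENNReal

/-- The rank-one operator `Λ̃f(x) = (1+‖x‖)^{1-n} ∫ (1+‖y‖)^{1-n} f(y) dy` is bounded
on `L^p(ℝ^n)` (for `n ≥ 3`, `1 < p < ∞`) if and only if `n/(n-1) < p < n`. -/
theorem stmt11 (n : ℕ) (hn : 3 ≤ n) (p : ℝ) (hp : 1 < p) :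
    ((n : ℝ) / ((n : ℝ) - 1) < p ∧ p < (n : ℝ)) ↔
      ∃ C : ℝ, 0 < C ∧
        ∀ f : EuclideanSpace ℝ (Fin n) → ℝ, MemLp f (ENNReal.ofReal p) volume →
          Integrable (fun y => (1 + ‖y‖) ^ ((1 : ℝ) - n) * f y) volume ∧
          MemLp (fun x : EuclideanSpace ℝ (Fin n) => (1 + ‖x‖) ^ ((1 : ℝ) - n) *
              ∫ y, (1 + ‖y‖) ^ ((1 : ℝ) - n) * f y) (ENNReal.ofReal p) volume ∧
          eLpNorm (fun x : EuclideanSpace ℝ (Fin n) => (1 + ‖x‖) ^ ((1 : ℝ) - n) *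
              ∫ y, (1 + ‖y‖) ^ ((1 : ℝ) - n) * f y) (ENNReal.ofReal p) volume
            ≤ ENNReal.ofReal C * eLpNorm f (ENNReal.ofReal p) volume := by
  constructor
  · rintro ⟨h1, h2⟩
    exact Stmt11Aux.forward n hn p hp h1 h2
  · rintro ⟨C, -, hC⟩
    constructor
    · by_contra h
      push_neg at h
      exact Stmt11Aux.back_a n hn p hp C hC h
    · by_contra h
      push_neg at h
      exact Stmt11Aux.back_b n hn p hp C hC h
end

section
/- Let n ≥ 3 be an integer and let 1 < p ≤ n, with p′ = p/(p−1). Then sup_{0<k≤1} k · ( ∫_{{y ∈ ℝ^n : ‖y‖ ≥ 1}} ‖y‖^{−(n−2)p′} e^{−p′k‖y‖} dy )^{1/p′} < ∞. -/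
open Set MeasureTheory
open scoped ENNReal

/-- The `I₂`-term estimate: for `n ≥ 3` and `1 < p ≤ n`, with `p' = p/(p-1)`,
`sup_{0<k≤1} k · (∫_{‖y‖≥1} ‖y‖^{-(n-2)p'} e^{-p'k‖y‖} dy)^{1/p'} < ∞`. -/
theorem stmt19 (n : ℕ) (hn : 3 ≤ n) (p : ℝ) (hp₁ : 1 < p) (hp₂ : p ≤ (n : ℝ)) :
    ∃ C : ℝ,
      ∀ k : ℝ, k ∈ Ioc (0 : ℝ) 1 →
        k * (∫ y in {y : EuclideanSpace ℝ (Fin n) | 1 ≤ ‖y‖},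
              ‖y‖ ^ (-(((n : ℝ) - 2) * (p / (p - 1))))
                * Real.exp (-((p / (p - 1)) * k * ‖y‖))) ^ (1 / (p / (p - 1)))
          ≤ C := by
  have hp0 : (0:ℝ) < p - 1 := by linarith
  have hn3 : (3:ℝ) ≤ (n:ℝ) := by exact_mod_cast hn
  set q : ℝ := p / (p - 1) with hqdef
  have hq1 : 1 < q := by
    rw [hqdef, lt_div_iff₀ hp0]; linarith
  have hq0 : (0:ℝ) < q := by linarith
  have hnq : (n : ℝ) ≤ ((n : ℝ) - 1) * q := by
    rw [hqdef, ← mul_div_assoc, le_div_iff₀ hp0]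
    nlinarith
  set β : ℝ := (n : ℝ) - 1 - ((n : ℝ) - 2) * q with hβdef
  set b : ℝ := max β (-2⁻¹) with hbdef
  have hb1 : (-1:ℝ) < b := lt_of_lt_of_le (by norm_num) (le_max_right _ _)
  have hb0 : (0:ℝ) < b + 1 := by linarith
  have hβb : β ≤ b := le_max_left _ _
  have hbq : b + 1 ≤ q := by
    have e : ((n:ℝ)-1)*q = ((n:ℝ)-2)*q + q := by ring
    rcases max_cases β (-2⁻¹ : ℝ) with ⟨h, _⟩ | ⟨h, _⟩ <;> rw [hbdef, h]
    · rw [hβdef]; linarith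
    · linarith
  haveI : Nontrivial (EuclideanSpace ℝ (Fin n)) := by
    apply Module.nontrivial_of_finrank_pos (R := ℝ)
    rw [finrank_euclideanSpace_fin]; omega
  have hS : MeasurableSet {y : EuclideanSpace ℝ (Fin n) | 1 ≤ ‖y‖} :=
    (isClosed_le continuous_const continuous_norm).measurableSet
  set V : ℝ := (volume (Metric.ball (0 : EuclideanSpace ℝ (Fin n)) 1)).toReal with hVdef
  have hV0 : 0 ≤ V := ENNReal.toReal_nonneg
  set A : ℝ := (n : ℝ) * V with hAdef
  have hA0 : 0 ≤ A := by positivity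
  set Γ : ℝ := Real.Gamma (b + 1) with hΓdef
  have hΓ0 : 0 < Γ := Real.Gamma_pos_of_pos hb0
  refine ⟨(A * Γ) ^ (1/q) * q ^ (-((b+1)/q)), ?_⟩
  rintro k ⟨hk0, hk1⟩
  have hqk : (0:ℝ) < q * k := mul_pos hq0 hk0
  set F₀ : ℝ → ℝ := fun r =>
    (Ici (1:ℝ)).indicator (fun r => r ^ (-(((n:ℝ)-2)*q)) * Real.exp (-(q*k*r))) r with hF₀def
  -- Step 1: the set integral is bounded by the Gamma-type quantity
  have hI : (∫ y in {y : EuclideanSpace ℝ (Fin n) | 1 ≤ ‖y‖},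
      ‖y‖ ^ (-(((n:ℝ) - 2) * q)) * Real.exp (-(q * k * ‖y‖)))
      ≤ A * ((1/(q*k)) ^ (b+1) * Γ) := by
    have h1 : (∫ y in {y : EuclideanSpace ℝ (Fin n) | 1 ≤ ‖y‖},
        ‖y‖ ^ (-(((n:ℝ) - 2) * q)) * Real.exp (-(q * k * ‖y‖)))
        = ∫ y : EuclideanSpace ℝ (Fin n), F₀ ‖y‖ := by
      rw [← integral_indicator hS]
      congr 1
    rw [h1, MeasureTheory.integral_fun_norm_addHaar volume F₀]
    simp only [finrank_euclideanSpace_fin, nsmul_eq_mul, smul_eq_mul]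
    rw [measureReal_def, ← hVdef, hAdef, mul_assoc]
    have key : (∫ r in Ioi (0:ℝ), r ^ (n - 1) * F₀ r)
        ≤ (1/(q*k)) ^ (b+1) * Γ := by
      have hint : IntegrableOn (fun r : ℝ => r ^ b * Real.exp (-(q*k*r))) (Ioi 0) := by
        have h := integrableOn_rpow_mul_exp_neg_mul_rpow hb1 (by norm_num : (0:ℝ) < 1) hqk
        refine h.congr_fun (fun x hx => ?_) measurableSet_Ioi
        simp only [Real.rpow_one]; ring_nf
      have hmono : (∫ r in Ioi (0:ℝ), r ^ (n-1) * F₀ r)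
          ≤ ∫ r in Ioi (0:ℝ), r ^ b * Real.exp (-(q*k*r)) := by
        refine integral_mono_of_nonneg ?_ hint ?_
        · filter_upwards [self_mem_ae_restrict measurableSet_Ioi] with r hr
          have hr0 : (0:ℝ) < r := hr
          exact mul_nonneg (pow_nonneg hr0.le _)
            (Set.indicator_nonneg (fun t ht => mul_nonneg (Real.rpow_nonneg (le_trans zero_le_one ht) _) (Real.exp_nonneg _)) r)
        · filter_upwards [self_mem_ae_restrict measurableSet_Ioi] with r hr
          have hr0 : (0:ℝ) < r := hr
          by_cases h1r : (1:ℝ) ≤ r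
          · rw [hF₀def]
            simp only [Set.indicator_of_mem (Set.mem_Ici.mpr h1r)]
            have hc : ((n-1 : ℕ) : ℝ) = (n:ℝ) - 1 := by
              rw [Nat.cast_sub (by omega)]; norm_num
            have e2 : r ^ (n-1) * (r ^ (-(((n:ℝ)-2)*q)) * Real.exp (-(q*k*r)))
                = r ^ β * Real.exp (-(q*k*r)) := by
              rw [← Real.rpow_natCast r (n-1), hc, ← mul_assoc,
                ← Real.rpow_add hr0,
                show ((n:ℝ)-1) + -(((n:ℝ)-2)*q) = β by rw [hβdef]; ring]
            rw [e2]
            exact mul_le_mul_of_nonneg_right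
              (Real.rpow_le_rpow_of_exponent_le h1r hβb) (Real.exp_nonneg _)
          · rw [hF₀def]
            simp only [Set.indicator_of_notMem (fun h => h1r (Set.mem_Ici.mp h))]
            rw [mul_zero]
            positivity
      have heval : (∫ r in Ioi (0:ℝ), r ^ b * Real.exp (-(q*k*r)))
          = (1/(q*k)) ^ (b+1) * Γ := by
        have h := Real.integral_rpow_mul_exp_neg_mul_Ioi hb0 hqk
        rw [hΓdef]
        simpa using h
      exact hmono.trans heval.le
    exact mul_le_mul_of_nonneg_left (mul_le_mul_of_nonneg_left key hV0) (by positivity)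
  -- Step 2: conclude
  have hInonneg : 0 ≤ (∫ y in {y : EuclideanSpace ℝ (Fin n) | 1 ≤ ‖y‖},
      ‖y‖ ^ (-(((n:ℝ) - 2) * q)) * Real.exp (-(q * k * ‖y‖))) :=
    integral_nonneg fun y => by positivity
  have h2 : (∫ y in {y : EuclideanSpace ℝ (Fin n) | 1 ≤ ‖y‖},
      ‖y‖ ^ (-(((n:ℝ) - 2) * q)) * Real.exp (-(q * k * ‖y‖))) ^ (1/q)
      ≤ (A * ((1/(q*k)) ^ (b+1) * Γ)) ^ (1/q) :=
    Real.rpow_le_rpow hInonneg hI (by positivity)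
  have e1 : A * ((1/(q*k)) ^ (b+1) * Γ) = (A * Γ) * ((q*k) ^ (-(b+1))) := by
    rw [one_div, Real.inv_rpow hqk.le, ← Real.rpow_neg hqk.le]; ring
  have e2 : ((A * Γ) * ((q*k) ^ (-(b+1)))) ^ (1/q)
      = (A * Γ) ^ (1/q) * (q ^ (-((b+1)/q)) * k ^ (-((b+1)/q))) := by
    rw [Real.mul_rpow (by positivity) (Real.rpow_nonneg hqk.le _),
      ← Real.rpow_mul hqk.le, neg_mul, mul_one_div,
      Real.mul_rpow hq0.le hk0.le]
  calc k * (∫ y in {y : EuclideanSpace ℝ (Fin n) | 1 ≤ ‖y‖},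
        ‖y‖ ^ (-(((n:ℝ) - 2) * q)) * Real.exp (-(q * k * ‖y‖))) ^ (1/q)
      ≤ k * ((A * Γ) ^ (1/q) * (q ^ (-((b+1)/q)) * k ^ (-((b+1)/q)))) := by
        rw [← e2, ← e1]; exact mul_le_mul_of_nonneg_left h2 hk0.le
    _ = ((A*Γ)^(1/q) * q^(-((b+1)/q))) * k ^ (1 - (b+1)/q) := by
        rw [show (1 : ℝ) - (b+1)/q = 1 + (-((b+1)/q)) by ring, Real.rpow_add hk0,
          Real.rpow_one]
        ring
    _ ≤ ((A*Γ)^(1/q) * q^(-((b+1)/q))) * 1 := by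
        refine mul_le_mul_of_nonneg_left ?_ (by positivity)
        exact Real.rpow_le_one hk0.le hk1 (by rw [sub_nonneg]; exact (div_le_one hq0).mpr hbq)
    _ = (A * Γ) ^ (1/q) * q ^ (-((b+1)/q)) := mul_one _
end
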